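/- arXiv:2602.12795 — 10 statements merged into one kernel-verified Lean document; each statement's English description precedes it below -/
import Mathlib

section
/- Let n ≥ 1 and let A : Matrix (Fin n) (Fin n) ℤ be symmetric with A.det ≠ 0, and let B := (A.map (Int.cast : ℤ → ℚ))⁻¹. If x : Fin n → ℤ satisfies that x ⬝ᵥ B.mulVec y ∈ Set.range (Int.cast : ℤ → ℚ) for every y : Fin n → ℤ, then there exists z : Fin n → ℤ with x = A.mulVec z. In other words, the linking pairing λ_A on the cokernel (Fin n → ℤ) ⧸ (range of A.mulVecLin) is nonsingular: its adjoint is injective (equivalently bijective, since the cokernel is finite). -/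
open Matrix

/-- The rational linking value `x ⬝ᵥ A⁻¹ℚ.mulVec y` of two integer vectors,
computed with the inverse of `A` over `ℚ`. -/
noncomputable def linkQ {ι : Type*} [Fintype ι] [DecidableEq ι]
    (A : Matrix ι ι ℤ) (x y : ι → ℤ) : ℚ :=
  (fun i => (x i : ℚ)) ⬝ᵥ ((A.map (Int.cast : ℤ → ℚ))⁻¹).mulVec (fun i => (y i : ℚ))

/-- Nonsingularity of the linking pairing: if `x` pairs integrally with every `y`,
then `x` lies in the image of `A`. -/
theorem stmt_1 (n : ℕ) (hn : 1 ≤ n) (A : Matrix (Fin n) (Fin n) ℤ)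
    (hsymm : Aᵀ = A) (hdet : A.det ≠ 0) (x : Fin n → ℤ)
    (hx : ∀ y : Fin n → ℤ, linkQ A x y ∈ Set.range (Int.cast : ℤ → ℚ)) :
    ∃ z : Fin n → ℤ, x = A.mulVec z := by
  set AQ : Matrix (Fin n) (Fin n) ℚ := A.map (Int.cast : ℤ → ℚ) with hAQ
  have hdetQ : AQ.det ≠ 0 := by
    rw [hAQ]
    have : (A.map (Int.cast : ℤ → ℚ)).det = ((A.det : ℤ) : ℚ) :=
      (RingHom.map_det (Int.castRingHom ℚ) A).symm
    rw [this]
    exact_mod_cast hdet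
  have hsymmQ : AQᵀ = AQ := by
    rw [hAQ, ← Matrix.transpose_map, hsymm]
  have hinvsymm : (AQ⁻¹)ᵀ = AQ⁻¹ := by
    rw [Matrix.transpose_nonsing_inv, hsymmQ]
  set xQ : Fin n → ℚ := fun i => (x i : ℚ) with hxQ
  set w : Fin n → ℚ := AQ⁻¹.mulVec xQ with hw
  -- each entry of w is an integer
  have hwint : ∀ j, ∃ m : ℤ, w j = (m : ℚ) := by
    intro j
    obtain ⟨m, hm⟩ := hx (Pi.single j 1)
    refine ⟨m, ?_⟩
    have : linkQ A x (Pi.single j 1) = w j := by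
      unfold linkQ
      have hy : (fun i => ((Pi.single j 1 : Fin n → ℤ) i : ℚ)) = Pi.single j 1 := by
        ext i
        by_cases h : i = j
        · subst h; simp
        · simp [Pi.single_eq_of_ne h]
      rw [hy, Matrix.mulVec_single]
      rw [hw]
      simp only [Matrix.mulVec, dotProduct, mul_one]
      refine Finset.sum_congr rfl fun i _ => ?_
      have : AQ⁻¹ j i = AQ⁻¹ i j := by
        conv_lhs => rw [← hinvsymm]
        rfl
      rw [this]
      rw [Pi.smul_apply, op_smul_eq_mul, Matrix.col_apply, ← hAQ]
      ring
    rw [← this, ← hm]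
  choose z hz using hwint
  refine ⟨z, ?_⟩
  have hAw : AQ.mulVec w = xQ := by
    rw [hw, Matrix.mulVec_mulVec, Matrix.mul_nonsing_inv _ (isUnit_iff_ne_zero.mpr hdetQ), Matrix.one_mulVec]
  funext i
  have : ((A.mulVec z) i : ℚ) = xQ i := by
    rw [← hAw]
    simp only [Matrix.mulVec, dotProduct]
    push_cast
    refine Finset.sum_congr rfl fun k _ => ?_
    rw [← hz k, hAQ]
    simp [Matrix.map_apply]
  have h2 : ((x i : ℚ)) = ((A.mulVec z) i : ℚ) := this.symm
  exact_mod_cast h2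
end

section
/- Let n ≥ 1 and a : ℤ. The cyclic pairing ⟨a/n⟩ on ZMod n is nonsingular — i.e. for every x : ℤ, if the class of (a * x * y : ℚ) / n in AddCircle (1 : ℚ) is 0 for every y : ℤ, then (n : ℤ) ∣ x — if and only if Int.gcd a n = 1. -/
/-- The cyclic pairing `⟨a/n⟩` on `ZMod n` is nonsingular iff `gcd(a, n) = 1`. -/
theorem stmt_9 (n : ℕ) (hn : 1 ≤ n) (a : ℤ) :
    (∀ x : ℤ,
        (∀ y : ℤ,
          ((((a : ℚ) * (x : ℚ) * (y : ℚ)) / (n : ℚ) : ℚ) : AddCircle (1 : ℚ)) = 0) →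
        (n : ℤ) ∣ x) ↔
      Int.gcd a n = 1 := by
  have hnpos : 0 < n := hn
  have hn0 : (n : ℚ) ≠ 0 := by exact_mod_cast hnpos.ne'
  have key : ∀ x y : ℤ,
      ((((a : ℚ) * (x : ℚ) * (y : ℚ)) / (n : ℚ) : ℚ) : AddCircle (1 : ℚ)) = 0 ↔
        (n : ℤ) ∣ a * x * y := by
    intro x y
    rw [AddCircle.coe_eq_zero_iff]
    constructor
    · rintro ⟨z, hz⟩
      rw [zsmul_eq_mul, mul_one] at hz
      refine ⟨z, ?_⟩
      have : (z : ℚ) * n = (a : ℚ) * x * y := by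
        rw [hz]; field_simp
      rw [mul_comm] at this
      exact_mod_cast this.symm
    · rintro ⟨c, hc⟩
      refine ⟨c, ?_⟩
      rw [zsmul_eq_mul, mul_one]
      have : ((a : ℚ) * x * y) = (n : ℚ) * c := by exact_mod_cast congrArg (Int.cast : ℤ → ℚ) hc
      rw [this]
      field_simp
  constructor
  · intro h
    set g := Int.gcd a n with hg
    have hgn : g ∣ n := by
      have : ((Int.gcd a n : ℕ) : ℤ) ∣ (n : ℤ) := Int.gcd_dvd_right a n
      exact_mod_cast this
    have hga : (g : ℤ) ∣ a := Int.gcd_dvd_left a n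
    have hgpos : 0 < g := by
      rcases Nat.eq_zero_or_pos g with h0 | h0
      · exfalso
        have := Int.gcd_eq_zero_iff.mp h0
        have : n = 0 := by exact_mod_cast this.2
        omega
      · exact h0
    have hdiv : (n : ℤ) ∣ ((n / g : ℕ) : ℤ) := by
      apply h
      intro y
      rw [key]
      obtain ⟨a', ha⟩ := hga
      refine Dvd.dvd.mul_right ⟨a', ?_⟩ y
      rw [ha]
      have : (g : ℤ) * ((n / g : ℕ) : ℤ) = (n : ℤ) := by
        exact_mod_cast congrArg (Nat.cast : ℕ → ℤ) (Nat.mul_div_cancel' hgn)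
      calc (g : ℤ) * a' * ((n / g : ℕ) : ℤ) = a' * ((g : ℤ) * ((n / g : ℕ) : ℤ)) := by ring
        _ = a' * n := by rw [this]
        _ = (n : ℤ) * a' := mul_comm _ _
    have hdvd2 : n ∣ n / g := by exact_mod_cast hdiv
    have hle : n / g ∣ n := Nat.div_dvd_of_dvd hgn
    have hpos : 0 < n / g := Nat.div_pos (Nat.le_of_dvd hnpos hgn) hgpos
    have heq : n / g = n := Nat.dvd_antisymm hle hdvd2
    have : g * n = n := by
      calc g * n = g * (n / g) := by rw [heq]
        _ = n := Nat.mul_div_cancel' hgn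
    have : g * n = 1 * n := by omega
    exact Nat.eq_of_mul_eq_mul_right hnpos this
  · intro hg x hx
    have h1 := (key x 1).mp (hx 1)
    rw [mul_one] at h1
    have hco : IsCoprime (n : ℤ) a := (Int.isCoprime_iff_gcd_eq_one.mpr hg).symm
    exact hco.dvd_of_dvd_mul_left h1
end

section
/- Let n ≥ 2 and let a, b : ℤ satisfy Int.gcd a n = 1 and Int.gcd b n = 1. Then the cyclic pairings ⟨a/n⟩ and ⟨b/n⟩ on ZMod n are isometric — i.e. there exists an additive automorphism φ : ZMod n ≃+ ZMod n such that for all x, y : ZMod n, the class of (b * (φ x).val * (φ y).val : ℚ) / n equals the class of (a * x.val * y.val : ℚ) / n in AddCircle (1 : ℚ) — if and only if there exists a unit u : (ZMod n)ˣ with (b : ZMod n) = (↑u)^2 * (a : ZMod n). -/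
lemma key' (n : ℕ) (hn : 0 < n) (k m : ℤ) :
    (((k : ℚ)/(n : ℚ) : ℚ) : AddCircle (1 : ℚ)) = (((m : ℚ)/(n : ℚ) : ℚ) : AddCircle (1 : ℚ)) ↔
      (n : ℤ) ∣ (k - m) := by
  have hn' : (n : ℚ) ≠ 0 := by positivity
  rw [← sub_eq_zero, ← AddCircle.coe_sub, AddCircle.coe_eq_zero_iff]
  constructor
  · rintro ⟨z, hz⟩
    refine ⟨z, ?_⟩
    rw [zsmul_eq_mul, mul_one] at hz
    have h2 : (k : ℚ) - m = z * n := by field_simp at hz; linarith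
    have : (k - m : ℤ) = ((n : ℤ) * z) := by exact_mod_cast h2.trans (mul_comm _ _)
    exact this
  · rintro ⟨z, hz⟩
    refine ⟨z, ?_⟩
    rw [zsmul_eq_mul, mul_one]
    have h2 : ((k - m : ℤ) : ℚ) = ((n : ℤ) * z : ℤ) := by exact_mod_cast congrArg (Int.cast : ℤ → ℚ) hz
    push_cast at h2
    field_simp
    linarith

/-- For `n ≥ 2` and units `a, b` mod `n`, the cyclic pairings `⟨a/n⟩` and `⟨b/n⟩` on
`ZMod n` are isometric iff `b ≡ u² a (mod n)` for some unit `u`. -/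
theorem stmt_10 (n : ℕ) (hn : 2 ≤ n) (a b : ℤ)
    (ha : Int.gcd a n = 1) (hb : Int.gcd b n = 1) :
    (∃ φ : ZMod n ≃+ ZMod n, ∀ x y : ZMod n,
        ((((b : ℚ) * ((φ x).val : ℚ) * ((φ y).val : ℚ)) / (n : ℚ) : ℚ) : AddCircle (1 : ℚ)) =
          ((((a : ℚ) * (x.val : ℚ) * (y.val : ℚ)) / (n : ℚ) : ℚ) : AddCircle (1 : ℚ))) ↔
      ∃ u : (ZMod n)ˣ, (b : ZMod n) = (↑u : ZMod n) ^ 2 * (a : ZMod n) := by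
  have hn0 : 0 < n := by omega
  haveI : NeZero n := ⟨hn0.ne'⟩
  have main : ∀ (c d : ℤ) (x y z w : ZMod n),
      ((((c : ℚ) * (x.val : ℚ) * (y.val : ℚ)) / (n : ℚ) : ℚ) : AddCircle (1 : ℚ)) =
        ((((d : ℚ) * (z.val : ℚ) * (w.val : ℚ)) / (n : ℚ) : ℚ) : AddCircle (1 : ℚ)) ↔
      (c : ZMod n) * x * y = (d : ZMod n) * z * w := by
    intro c d x y z w
    have e1 : (c : ℚ) * (x.val : ℚ) * (y.val : ℚ)
        = ((c * (x.val : ℤ) * (y.val : ℤ) : ℤ) : ℚ) := by push_cast; ring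
    have e2 : (d : ℚ) * (z.val : ℚ) * (w.val : ℚ)
        = ((d * (z.val : ℤ) * (w.val : ℤ) : ℤ) : ℚ) := by push_cast; ring
    rw [e1, e2, key' n hn0, ← ZMod.intCast_zmod_eq_zero_iff_dvd]
    push_cast [ZMod.natCast_val, ZMod.cast_id]
    exact sub_eq_zero
  constructor
  · rintro ⟨φ, hφ⟩
    set c := φ 1 with hc
    have h11 : (b : ZMod n) * c * c = (a : ZMod n) := by
      have := (main b a c c 1 1).mp (hφ 1 1)
      simpa using this
    have hua : IsUnit ((a : ZMod n)) := by
      obtain ⟨x, y, h⟩ := Int.isCoprime_iff_gcd_eq_one.mpr ha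
      have hx : ((x : ZMod n)) * a = 1 := by
        have := congrArg (Int.cast : ℤ → ZMod n) h
        push_cast at this
        simpa [ZMod.natCast_self] using this
      exact IsUnit.of_mul_eq_one _ (mul_comm (x : ZMod n) _ ▸ hx)
    have huc : IsUnit c := by
      have : IsUnit ((b : ZMod n) * c * c) := h11 ▸ hua
      exact isUnit_of_mul_isUnit_right this
    obtain ⟨cu, hcu⟩ := huc
    refine ⟨cu⁻¹, ?_⟩
    have : ((↑cu⁻¹ : ZMod n)) ^ 2 * (a : ZMod n) = (b : ZMod n) :=
      calc ((↑cu⁻¹ : ZMod n)) ^ 2 * (a : ZMod n)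
          = (↑cu⁻¹ : ZMod n) ^ 2 * ((b : ZMod n) * c * c) := by rw [h11]
        _ = (b : ZMod n) * (((↑cu⁻¹ : ZMod n) * ↑cu) * ((↑cu⁻¹ : ZMod n) * ↑cu)) := by
              rw [← hcu]; ring
        _ = (b : ZMod n) := by rw [cu.inv_mul]; ring
    exact this.symm
  · rintro ⟨u, hu⟩
    refine ⟨AddAut.mulLeft u⁻¹, fun x y => ?_⟩
    have hx : (AddAut.mulLeft u⁻¹) x = (↑u⁻¹ : ZMod n) * x := rfl
    have hy : (AddAut.mulLeft u⁻¹) y = (↑u⁻¹ : ZMod n) * y := rfl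
    rw [main b a _ _ x y]
    change (b : ZMod n) * ((↑u⁻¹ : ZMod n) * x) * ((↑u⁻¹ : ZMod n) * y) = _
    rw [hu]
    calc ((↑u : ZMod n) ^ 2 * (a : ZMod n)) * ((↑u⁻¹ : ZMod n) * x) * ((↑u⁻¹ : ZMod n) * y)
        = (a : ZMod n) * x * y * (((↑u : ZMod n) * ↑u⁻¹) * ((↑u : ZMod n) * ↑u⁻¹)) := by ring
      _ = (a : ZMod n) * x * y := by rw [u.mul_inv]; ring
end

section
/- Let G be a finite additive abelian group and let λ : G →+ G →+ AddCircle (1 : ℚ) be symmetric (λ x y = λ y x) with bijective adjoint (the map G → (G →+ AddCircle (1 : ℚ)), x ↦ λ x, is bijective). Let p be a prime and k ≥ 1. Then for every z : G, the following are equivalent: (a) λ z y = 0 for every y : G with p^k • y = 0; (b) there exists w : G with z = p^k • w. That is, the annihilator of the p^k-torsion subgroup under λ equals p^k • G. -/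
/-- For a nonsingular symmetric linking pairing on a finite abelian group, the
annihilator of the `p^k`-torsion subgroup equals `p^k • G`. -/
theorem stmt_11 (G : Type*) [AddCommGroup G] [Fintype G]
    (l : G →+ G →+ AddCircle (1 : ℚ))
    (hsymm : ∀ x y : G, l x y = l y x)
    (hadj : Function.Bijective fun x : G => l x)
    (p : ℕ) (hp : p.Prime) (k : ℕ) (hk : 1 ≤ k) (z : G) :
    (∀ y : G, p ^ k • y = 0 → l z y = 0) ↔ ∃ w : G, z = p ^ k • w := by
  constructor
  · intro h
    -- the multiplication-by-p^k map
    set n : ℕ := p ^ k with hn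
    let m : G →+ G :=
      { toFun := fun y => n • y
        map_zero' := by simp
        map_add' := fun a b => smul_add n a b }
    -- l z vanishes on ker m, so it factors through the quotient
    have hker : ∀ y ∈ m.ker, y ∈ (l z).ker := by
      intro y hy
      exact h y hy
    let ψ : (G ⧸ m.ker) →+ AddCircle (1 : ℚ) := QuotientAddGroup.lift m.ker (l z) hker
    -- the injection of the quotient into G induced by m
    let ι : (G ⧸ m.ker) →+ G := QuotientAddGroup.kerLift m
    have hι : Function.Injective ι := QuotientAddGroup.kerLift_injective m
    -- extend ψ along ι using injectivity of ℚ/ℤ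
    obtain ⟨g, hg⟩ := CharacterModule.dual_surjective_of_injective
      (ι.toIntLinearMap) hι (ψ : CharacterModule (G ⧸ m.ker))
    -- g : CharacterModule G = G →+ ℚ/ℤ; get w with l w = g
    obtain ⟨w, hw⟩ := hadj.2 (g : G →+ AddCircle (1 : ℚ))
    refine ⟨w, ?_⟩
    apply hadj.1
    have hw' : l w = g := hw
    show l z = l (n • w)
    ext y
    have h1 : (g : G →+ AddCircle (1 : ℚ)) (m y) = l z y := by
      have := congrFun (congrArg DFunLike.coe hg) (QuotientAddGroup.mk y)
      exact this
    calc l z y = (g : G →+ AddCircle (1 : ℚ)) (n • y) := h1.symm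
      _ = l w (n • y) := by rw [hw']; rfl
      _ = n • (l w y) := by rw [map_nsmul]
      _ = l (n • w) y := by rw [map_nsmul]; rfl
  · rintro ⟨w, rfl⟩ y hy
    have : l (p ^ k • w) y = l w (p ^ k • y) := by
      rw [map_nsmul l, AddMonoidHom.nsmul_apply, map_nsmul]
    rw [this, hy, map_zero]
end

section
/- Let G be a finite additive abelian group and let λ : G →+ G →+ AddCircle (1 : ℚ) be symmetric with bijective adjoint. Let p be a prime and k ≥ 1. Suppose x : G satisfies p^k • x = 0 and p^(k-1) • (λ x y) = 0 for every y : G with p^k • y = 0. Then there exist u, v : G with p^(k-1) • u = 0, p^(k+1) • v = 0, and x = u + p • v. (This is the nonsingularity of the induced layer form b_k on P_k(G) = G_k / (G_{k-1} + p·G_{k+1}): its radical is trivial.) -/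
/-- Nonsingularity of the layer form `b_k`: an element of `G_k` pairing trivially (at
layer `k`) with all of `G_k` lies in `G_{k-1} + p • G_{k+1}`. -/
theorem stmt_12 (G : Type*) [AddCommGroup G] [Fintype G]
    (l : G →+ G →+ AddCircle (1 : ℚ))
    (hsymm : ∀ x y : G, l x y = l y x)
    (hadj : Function.Bijective fun x : G => l x)
    (p : ℕ) (hp : p.Prime) (k : ℕ) (hk : 1 ≤ k) (x : G)
    (hx : p ^ k • x = 0)
    (hlx : ∀ y : G, p ^ k • y = 0 → p ^ (k - 1) • (l x y) = 0) :
    ∃ u v : G, p ^ (k - 1) • u = 0 ∧ p ^ (k + 1) • v = 0 ∧ x = u + p • v := by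
  have hk' : k - 1 + 1 = k := Nat.succ_pred_eq_of_pos hk
  -- the multiplication-by-p^k map
  set f : G →+ G := zsmulAddGroupHom (p ^ k : ℤ) with hf
  have hfapp : ∀ y : G, f y = p ^ k • y := by
    intro y
    simp [hf, zsmulAddGroupHom]; norm_cast
  set z : G := p ^ (k - 1) • x with hz
  -- key claim : z is in the range of f
  have key : ∃ w : G, p ^ k • w = z := by
    by_contra h
    push_neg at h
    have hzH : z ∉ f.range := by
      rintro ⟨w, hw⟩
      exact h w (by rw [← hfapp]; exact hw)
    set π := QuotientAddGroup.mk' f.range with hπ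
    have hπz : π z ≠ 0 := by
      rw [hπ]
      simpa [QuotientAddGroup.eq_zero_iff] using hzH
    obtain ⟨c, hc⟩ := CharacterModule.exists_character_apply_ne_zero_of_ne_zero hπz
    set χ : G →+ AddCircle (1 : ℚ) := AddMonoidHom.comp (c : _ →+ _) π with hχ
    obtain ⟨a, ha⟩ := hadj.2 χ
    have ha' : ∀ y : G, l a y = χ y := fun y => congrFun (congrArg _ ha) y
    have haker : p ^ k • a = 0 := by
      apply hadj.1
      ext y
      simp only
      rw [← hsymm]
      have : l y (p ^ k • a) = p ^ k • l y a := by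
        simp [map_nsmul]
      rw [this, hsymm, ha', ← map_nsmul]
      have : π (p ^ k • y) = 0 := by
        rw [hπ, QuotientAddGroup.mk'_apply, QuotientAddGroup.eq_zero_iff]
        exact ⟨y, (hfapp y).symm ▸ rfl⟩
      rw [hχ]
      simp only [AddMonoidHom.comp_apply, this, map_zero]
      change c (π (p ^ k • y)) = 0
      rw [this, map_zero]
    have hlza : l z a = 0 := by
      rw [hz, map_nsmul]
      simp only [AddMonoidHom.nsmul_apply]
      exact hlx a haker
    apply hc
    have : χ z = l a z := (ha' z).symm
    rw [hχ] at this
    change c (π z) = l a z at this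
    rw [this, hsymm, hlza]
  obtain ⟨w, hw⟩ := key
  refine ⟨x - p • w, w, ?_, ?_, by abel⟩
  · rw [smul_sub, smul_smul (p ^ (k-1)) p, ← pow_succ, hk', hw, hz, sub_self]
  · rw [pow_succ', mul_smul, hw, hz, smul_smul, ← pow_succ', hk', hx]
end

section
/- Let n : ℕ and let M : Matrix (Fin n) (Fin n) (ZMod 2) be symmetric with IsUnit M.det and with zero diagonal (M i i = 0 for all i). Then n is even, say n = 2 * m, and there exist an equivalence e : Fin m × Fin 2 ≃ Fin n and a matrix S : Matrix (Fin n) (Fin n) (ZMod 2) with IsUnit S.det such that Sᵀ * M * S = (Matrix.blockDiagonal (fun _ : Fin m => !![0, 1; 1, 0])).reindex e e. That is, every nonsingular alternating symmetric bilinear form over 𝔽₂ is congruent to an orthogonal sum of m hyperbolic planes. -/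
open Matrix

namespace Stmt14Aux

variable {ι : Type} [Fintype ι] [DecidableEq ι]

/-- The clearing matrix `E`. -/
def Emat (M : Matrix ι ι (ZMod 2)) (i₀ j₀ : ι) : Matrix ι ι (ZMod 2) :=
  Matrix.of fun a k =>
    if k = i₀ ∨ k = j₀ then 0
    else if a = j₀ then M i₀ k else if a = i₀ then M j₀ k else 0

section

variable (M : Matrix ι ι (ZMod 2)) (i₀ j₀ : ι) (hne : i₀ ≠ j₀)

lemma mulE0 (X : Matrix ι ι (ZMod 2)) (p q : ι) (hq : q = i₀ ∨ q = j₀) :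
    (X * Emat M i₀ j₀) p q = 0 := by
  rw [Matrix.mul_apply]
  apply Finset.sum_eq_zero
  intro b _
  simp [Emat, hq]

include hne in
lemma mulE1 (X : Matrix ι ι (ZMod 2)) (p q : ι) (hq : ¬(q = i₀ ∨ q = j₀)) :
    (X * Emat M i₀ j₀) p q = X p j₀ * M i₀ q + X p i₀ * M j₀ q := by
  rw [Matrix.mul_apply]
  have key : ∀ b : ι, X p b * Emat M i₀ j₀ b q =
      (if b = j₀ then X p b * M i₀ q else 0) + (if b = i₀ then X p b * M j₀ q else 0) := by
    intro b
    by_cases h1 : b = j₀ <;> by_cases h2 : b = i₀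
    · exact absurd (h2 ▸ h1) hne
    · simp [Emat, hq, h1, h2, hne, Ne.symm hne]
    · simp [Emat, hq, h1, h2, hne, Ne.symm hne]
    · simp [Emat, hq, h1, h2, hne, Ne.symm hne]
  rw [Finset.sum_congr rfl fun b _ => key b, Finset.sum_add_distrib,
    Finset.sum_ite_eq' Finset.univ j₀ (fun b => X p b * M i₀ q),
    Finset.sum_ite_eq' Finset.univ i₀ (fun b => X p b * M j₀ q)]
  simp

lemma ETmul0 (X : Matrix ι ι (ZMod 2)) (p q : ι) (hp : p = i₀ ∨ p = j₀) :
    ((Emat M i₀ j₀)ᵀ * X) p q = 0 := by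
  rw [Matrix.mul_apply]
  apply Finset.sum_eq_zero
  intro b _
  simp [Emat, hp]

include hne in
lemma ETmul1 (X : Matrix ι ι (ZMod 2)) (p q : ι) (hp : ¬(p = i₀ ∨ p = j₀)) :
    ((Emat M i₀ j₀)ᵀ * X) p q = M i₀ p * X j₀ q + M j₀ p * X i₀ q := by
  rw [Matrix.mul_apply]
  have key : ∀ b : ι, (Emat M i₀ j₀)ᵀ p b * X b q =
      (if b = j₀ then M i₀ p * X b q else 0) + (if b = i₀ then M j₀ p * X b q else 0) := by
    intro b
    by_cases h1 : b = j₀ <;> by_cases h2 : b = i₀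
    · exact absurd (h2 ▸ h1) hne
    · simp [Emat, Matrix.transpose_apply, hp, h1, h2, hne, Ne.symm hne]
    · simp [Emat, Matrix.transpose_apply, hp, h1, h2, hne, Ne.symm hne]
    · simp [Emat, Matrix.transpose_apply, hp, h1, h2, hne, Ne.symm hne]
  rw [Finset.sum_congr rfl fun b _ => key b, Finset.sum_add_distrib,
    Finset.sum_ite_eq' Finset.univ j₀ (fun b => M i₀ p * X b q),
    Finset.sum_ite_eq' Finset.univ i₀ (fun b => M j₀ p * X b q)]
  simp

lemma Esq : Emat M i₀ j₀ * Emat M i₀ j₀ = 0 := by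
  ext a k
  rw [Matrix.mul_apply]
  apply Finset.sum_eq_zero
  intro b _
  by_cases hb : b = i₀ ∨ b = j₀
  · simp [Emat, hb]
  · push_neg at hb
    simp [Emat, hb.1, hb.2]

lemma S0_mul_self : (1 + Emat M i₀ j₀) * (1 + Emat M i₀ j₀) = 1 := by
  have h0 : Emat M i₀ j₀ + Emat M i₀ j₀ = 0 := by
    ext a k; exact CharTwo.add_self_eq_zero _
  rw [add_mul, mul_add, mul_add, Esq, mul_one, one_mul, add_zero, add_assoc, mul_one, h0, add_zero]

end

lemma congr_diag (M S : Matrix ι ι (ZMod 2)) (hsymm : Mᵀ = M) (hdiag : ∀ i, M i i = 0)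
    (k : ι) : (Sᵀ * M * S) k k = 0 := by
  have hMsymm : ∀ a b, M b a = M a b := fun a b => by conv_lhs => rw [← hsymm, Matrix.transpose_apply]
  have hexp : (Sᵀ * M * S) k k = ∑ x : ι × ι, S x.1 k * M x.1 x.2 * S x.2 k := by
    rw [Matrix.mul_apply]
    simp_rw [Matrix.mul_apply, Matrix.transpose_apply, Finset.sum_mul]
    rw [Fintype.sum_prod_type]
    exact Finset.sum_comm
  rw [hexp]
  refine Finset.sum_ninvolution Prod.swap ?_ ?_ (fun a => Finset.mem_univ _)
    (fun a => Prod.swap_swap a)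
  · intro x
    have h1 : S x.2 k * M x.2 x.1 * S x.1 k = S x.1 k * M x.1 x.2 * S x.2 k := by
      rw [hMsymm]; ring
    simp only [Prod.fst_swap, Prod.snd_swap]
    rw [h1]
    exact CharTwo.add_self_eq_zero _
  · intro x hfx h
    apply hfx
    have h2 : x.2 = x.1 := congrArg Prod.fst h
    rw [h2, hdiag]
    ring

section

variable (M : Matrix ι ι (ZMod 2)) (i₀ j₀ : ι) (hne : i₀ ≠ j₀)
  (hsymm : Mᵀ = M) (hdiag : ∀ i, M i i = 0) (hM1 : M i₀ j₀ = 1)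

/-- The matrix after the clearing step. -/
def Nmat : Matrix ι ι (ZMod 2) := (1 + Emat M i₀ j₀)ᵀ * M * (1 + Emat M i₀ j₀)

lemma Nexpand : Nmat M i₀ j₀ =
    M + (Emat M i₀ j₀)ᵀ * M +
      (M * Emat M i₀ j₀ + (Emat M i₀ j₀)ᵀ * (M * Emat M i₀ j₀)) := by
  unfold Nmat
  rw [Matrix.transpose_add, Matrix.transpose_one]
  noncomm_ring

include hsymm in
lemma N_symm : (Nmat M i₀ j₀)ᵀ = Nmat M i₀ j₀ := by
  simp [Nmat, Matrix.transpose_mul, Matrix.transpose_transpose, hsymm, Matrix.mul_assoc]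

include hdiag in
lemma N_ii : Nmat M i₀ j₀ i₀ i₀ = 0 := by
  rw [Nexpand]
  simp only [Matrix.add_apply]
  rw [ETmul0 M i₀ j₀ M i₀ i₀ (Or.inl rfl), mulE0 M i₀ j₀ M i₀ i₀ (Or.inl rfl),
    ETmul0 M i₀ j₀ (M * Emat M i₀ j₀) i₀ i₀ (Or.inl rfl)]
  simp [hdiag]

include hdiag in
lemma N_jj : Nmat M i₀ j₀ j₀ j₀ = 0 := by
  rw [Nexpand]
  simp only [Matrix.add_apply]
  rw [ETmul0 M i₀ j₀ M j₀ j₀ (Or.inr rfl), mulE0 M i₀ j₀ M j₀ j₀ (Or.inr rfl),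
    ETmul0 M i₀ j₀ (M * Emat M i₀ j₀) j₀ j₀ (Or.inr rfl)]
  simp [hdiag]

include hM1 in
lemma N_ij : Nmat M i₀ j₀ i₀ j₀ = 1 := by
  rw [Nexpand]
  simp only [Matrix.add_apply]
  rw [ETmul0 M i₀ j₀ M i₀ j₀ (Or.inl rfl), mulE0 M i₀ j₀ M i₀ j₀ (Or.inr rfl),
    ETmul0 M i₀ j₀ (M * Emat M i₀ j₀) i₀ j₀ (Or.inl rfl)]
  simp [hM1]

include hsymm hM1 in
lemma N_ji : Nmat M i₀ j₀ j₀ i₀ = 1 := by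
  have hM1' : M j₀ i₀ = 1 := by
    have := congrFun (congrFun hsymm j₀) i₀
    rw [Matrix.transpose_apply] at this
    rw [← this, hM1]
  rw [Nexpand]
  simp only [Matrix.add_apply]
  rw [ETmul0 M i₀ j₀ M j₀ i₀ (Or.inr rfl), mulE0 M i₀ j₀ M j₀ i₀ (Or.inl rfl),
    ETmul0 M i₀ j₀ (M * Emat M i₀ j₀) j₀ i₀ (Or.inr rfl)]
  simp [hM1']

include hne hdiag hM1 in
lemma N_i_q (q : ι) (hq : ¬(q = i₀ ∨ q = j₀)) : Nmat M i₀ j₀ i₀ q = 0 := by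
  rw [Nexpand]
  simp only [Matrix.add_apply]
  rw [ETmul0 M i₀ j₀ M i₀ q (Or.inl rfl),
    ETmul0 M i₀ j₀ (M * Emat M i₀ j₀) i₀ q (Or.inl rfl),
    mulE1 M i₀ j₀ hne M i₀ q hq]
  simp [hM1, hdiag, CharTwo.add_self_eq_zero]

include hne hsymm hdiag hM1 in
lemma N_j_q (q : ι) (hq : ¬(q = i₀ ∨ q = j₀)) : Nmat M i₀ j₀ j₀ q = 0 := by
  have hM1' : M j₀ i₀ = 1 := by
    have := congrFun (congrFun hsymm j₀) i₀
    rw [Matrix.transpose_apply] at this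
    rw [← this, hM1]
  rw [Nexpand]
  simp only [Matrix.add_apply]
  rw [ETmul0 M i₀ j₀ M j₀ q (Or.inr rfl),
    ETmul0 M i₀ j₀ (M * Emat M i₀ j₀) j₀ q (Or.inr rfl),
    mulE1 M i₀ j₀ hne M j₀ q hq]
  simp [hM1', hdiag, CharTwo.add_self_eq_zero]

include hne hsymm hdiag hM1 in
lemma N_q_i (p : ι) (hp : ¬(p = i₀ ∨ p = j₀)) : Nmat M i₀ j₀ p i₀ = 0 := by
  have := congrFun (congrFun (N_symm M i₀ j₀ hsymm) p) i₀
  rw [Matrix.transpose_apply] at this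
  rw [← this]
  exact N_i_q M i₀ j₀ hne hdiag hM1 p hp

include hne hsymm hdiag hM1 in
lemma N_q_j (p : ι) (hp : ¬(p = i₀ ∨ p = j₀)) : Nmat M i₀ j₀ p j₀ = 0 := by
  have := congrFun (congrFun (N_symm M i₀ j₀ hsymm) p) j₀
  rw [Matrix.transpose_apply] at this
  rw [← this]
  exact N_j_q M i₀ j₀ hne hsymm hdiag hM1 p hp

include hsymm hdiag in
lemma N_diag (p : ι) : Nmat M i₀ j₀ p p = 0 :=
  congr_diag M (1 + Emat M i₀ j₀) hsymm hdiag p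

end

section

variable (i₀ j₀ : ι) (hne : i₀ ≠ j₀)

/-- Splitting of the index type off the pair `{i₀, j₀}`. -/
def eqv : (Fin 2 ⊕ {k : ι // ¬(k = i₀ ∨ k = j₀)}) ≃ ι :=
  ⟨Sum.elim (fun s => if s = 0 then i₀ else j₀) (fun k => k.1),
   fun k => if h : k = i₀ ∨ k = j₀ then Sum.inl (if k = i₀ then 0 else 1)
     else Sum.inr ⟨k, h⟩,
   by
    rintro (s | ⟨k, hk⟩)
    · fin_cases s
      · simp [hne]
      · simp [hne, Ne.symm hne]
    · simp [hk],
   by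
    intro k
    by_cases h : k = i₀ ∨ k = j₀
    · rcases h with h | h <;> subst h <;> simp [hne, Ne.symm hne]
    · simp [h]⟩

@[simp] lemma eqv_inl0 : eqv i₀ j₀ hne (Sum.inl 0) = i₀ := rfl

@[simp] lemma eqv_inl1 : eqv i₀ j₀ hne (Sum.inl 1) = j₀ := rfl

@[simp] lemma eqv_inr (k : {k : ι // ¬(k = i₀ ∨ k = j₀)}) : eqv i₀ j₀ hne (Sum.inr k) = k.1 := rfl

end

set_option maxHeartbeats 1000000 in
theorem core : ∀ (Nc : ℕ) (ι : Type) [Fintype ι] [DecidableEq ι],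
    Fintype.card ι = Nc → ∀ (M : Matrix ι ι (ZMod 2)), Mᵀ = M → IsUnit M.det →
    (∀ i, M i i = 0) →
    ∃ m : ℕ, Fintype.card ι = 2 * m ∧
      ∃ (e : Fin m × Fin 2 ≃ ι) (S : Matrix ι ι (ZMod 2)),
        IsUnit S.det ∧
          Sᵀ * M * S =
            Matrix.reindex ((Equiv.prodComm (Fin 2) (Fin m)).trans e)
              ((Equiv.prodComm (Fin 2) (Fin m)).trans e)
              (Matrix.blockDiagonal fun _ : Fin m =>
                (!![0, 1; 1, 0] : Matrix (Fin 2) (Fin 2) (ZMod 2))) := by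
  intro Nc
  induction Nc using Nat.strong_induction_on with
  | _ Nc ih =>
  intro ι _ _ hcard M hsymm hdet hdiag
  rcases Nat.eq_zero_or_pos (Fintype.card ι) with h0 | hpos
  · have hempty : IsEmpty ι := Fintype.card_eq_zero_iff.mp h0
    refine ⟨0, by simp [h0], Equiv.equivOfIsEmpty _ _, 1, by simp, ?_⟩
    ext i j
    exact (hempty.false i).elim
  · obtain ⟨i₀⟩ : Nonempty ι := Fintype.card_pos_iff.mp hpos
    obtain ⟨j₀, hj₀⟩ : ∃ j, M i₀ j ≠ 0 := by
      by_contra h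
      push_neg at h
      have hd0 : M.det = 0 := Matrix.det_eq_zero_of_row_eq_zero i₀ h
      rw [hd0] at hdet
      exact (by decide : ¬ IsUnit (0 : ZMod 2)) hdet
    have hM1 : M i₀ j₀ = 1 := by
      have h2 : ∀ a : ZMod 2, a ≠ 0 → a = 1 := by decide
      exact h2 _ hj₀
    have hne : i₀ ≠ j₀ := by
      intro h
      subst h
      rw [hdiag] at hM1
      exact (by decide : (0 : ZMod 2) ≠ 1) hM1
    set N := Nmat M i₀ j₀ with hN
    have hS₀sq : (1 + Emat M i₀ j₀) * (1 + Emat M i₀ j₀) = 1 := S0_mul_self M i₀ j₀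
    have hS₀det : IsUnit (1 + Emat M i₀ j₀).det := Matrix.isUnit_det_of_right_inverse hS₀sq
    have hNdef : N = (1 + Emat M i₀ j₀)ᵀ * M * (1 + Emat M i₀ j₀) := rfl
    have hNsymm := N_symm M i₀ j₀ hsymm
    have hNdiag := N_diag M i₀ j₀ hsymm hdiag
    set M' : Matrix {k : ι // ¬(k = i₀ ∨ k = j₀)} {k : ι // ¬(k = i₀ ∨ k = j₀)} (ZMod 2) :=
      Matrix.of (fun k l => N k.1 l.1) with hM'
    have hblock : Matrix.reindex (eqv i₀ j₀ hne).symm (eqv i₀ j₀ hne).symm N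
        = Matrix.fromBlocks !![0, 1; 1, 0] 0 0 M' := by
      ext x y
      rcases x with s | k <;> rcases y with t | l
      · fin_cases s <;> fin_cases t <;>
          simp [Matrix.reindex_apply, Matrix.submatrix_apply, hN,
            N_ii M i₀ j₀ hdiag, N_ij M i₀ j₀ hM1, N_ji M i₀ j₀ hsymm hM1,
            N_jj M i₀ j₀ hdiag]
      · fin_cases s <;>
          simp [Matrix.reindex_apply, Matrix.submatrix_apply, hN,
            N_i_q M i₀ j₀ hne hdiag hM1 l.1 l.2,
            N_j_q M i₀ j₀ hne hsymm hdiag hM1 l.1 l.2]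
      · fin_cases t <;>
          simp [Matrix.reindex_apply, Matrix.submatrix_apply, hN,
            N_q_i M i₀ j₀ hne hsymm hdiag hM1 k.1 k.2,
            N_q_j M i₀ j₀ hne hsymm hdiag hM1 k.1 k.2]
      · simp [Matrix.reindex_apply, Matrix.submatrix_apply, hM']
    have hNre : N = Matrix.reindex (eqv i₀ j₀ hne) (eqv i₀ j₀ hne)
        (Matrix.fromBlocks !![0, 1; 1, 0] 0 0 M') := by
      rw [← hblock, ← Matrix.reindex_symm, Equiv.apply_symm_apply]
    have hNdet : IsUnit N.det := by
      have htmp : N.det = (1 + Emat M i₀ j₀).det * M.det * (1 + Emat M i₀ j₀).det := by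
        rw [hNdef, Matrix.det_mul, Matrix.det_mul, Matrix.det_transpose]
      rw [htmp]
      exact (hS₀det.mul hdet).mul hS₀det
    have hdet' : IsUnit M'.det := by
      have h1 : N.det = (!![0, 1; 1, 0] : Matrix (Fin 2) (Fin 2) (ZMod 2)).det * M'.det := by
        rw [hNre, Matrix.det_reindex_self, Matrix.det_fromBlocks_zero₂₁]
      have h2 : (!![0, 1; 1, 0] : Matrix (Fin 2) (Fin 2) (ZMod 2)).det = 1 := by decide
      rw [h1, h2, one_mul] at hNdet
      exact hNdet
    have hM'symm : M'ᵀ = M' := by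
      ext k l
      show N l.1 k.1 = N k.1 l.1
      rw [hN]
      conv_lhs => rw [← hNsymm, Matrix.transpose_apply]
    have hM'diag : ∀ k, M' k k = 0 := fun k => hNdiag k.1
    have hcι : Fintype.card ι = 2 + Fintype.card {k : ι // ¬(k = i₀ ∨ k = j₀)} := by
      rw [← Fintype.card_congr (eqv i₀ j₀ hne)]
      simp
    have hlt : Fintype.card {k : ι // ¬(k = i₀ ∨ k = j₀)} < Nc := by omega
    obtain ⟨m', hm', e', S', hS'det, hS'eq⟩ :=
      ih _ hlt {k : ι // ¬(k = i₀ ∨ k = j₀)} rfl M' hM'symm hdet' hM'diag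
    refine ⟨m' + 1, by omega, ?_⟩
    refine ⟨⟨fun p => if h : p.1 = 0 then eqv i₀ j₀ hne (Sum.inl p.2)
        else eqv i₀ j₀ hne (Sum.inr (e' (p.1.pred h, p.2))),
      fun k => Sum.elim (fun s => ((0 : Fin (m' + 1)), s))
        (fun k' => ((e'.symm k').1.succ, (e'.symm k').2)) ((eqv i₀ j₀ hne).symm k),
      ?_, ?_⟩, ?_⟩
    · rintro ⟨a, s⟩
      by_cases h : a = 0
      · simp [h]
      · simp only [dif_neg h, Equiv.symm_apply_apply, Sum.elim_inr, Fin.succ_pred]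
    · intro k
      rcases hk : (eqv i₀ j₀ hne).symm k with s | k'
      · have hk' : eqv i₀ j₀ hne (Sum.inl s) = k := by rw [← hk, Equiv.apply_symm_apply]
        simp [hk, hk']
      · have hk' : eqv i₀ j₀ hne (Sum.inr k') = k := by rw [← hk, Equiv.apply_symm_apply]
        simp [hk, hk', Fin.succ_ne_zero, Fin.pred_succ]
    · refine ⟨(1 + Emat M i₀ j₀) * Matrix.reindex (eqv i₀ j₀ hne) (eqv i₀ j₀ hne)
        (Matrix.fromBlocks 1 0 0 S'), ?_, ?_⟩
      · rw [Matrix.det_mul, Matrix.det_reindex_self, Matrix.det_fromBlocks_zero₂₁,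
          Matrix.det_one, one_mul]
        exact hS₀det.mul hS'det
      · have hPt : (Matrix.reindex (eqv i₀ j₀ hne) (eqv i₀ j₀ hne)
            (Matrix.fromBlocks (1 : Matrix (Fin 2) (Fin 2) (ZMod 2)) 0 0 S'))ᵀ =
            Matrix.reindex (eqv i₀ j₀ hne) (eqv i₀ j₀ hne)
              (Matrix.fromBlocks 1 0 0 S'ᵀ) := by
          simp [Matrix.reindex_apply, Matrix.transpose_submatrix, Matrix.fromBlocks_transpose]
        have key : ((1 + Emat M i₀ j₀) * Matrix.reindex (eqv i₀ j₀ hne) (eqv i₀ j₀ hne)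
              (Matrix.fromBlocks 1 0 0 S'))ᵀ * M *
              ((1 + Emat M i₀ j₀) * Matrix.reindex (eqv i₀ j₀ hne) (eqv i₀ j₀ hne)
              (Matrix.fromBlocks 1 0 0 S')) =
            (Matrix.reindex (eqv i₀ j₀ hne) (eqv i₀ j₀ hne)
              (Matrix.fromBlocks 1 0 0 S'))ᵀ * N *
              Matrix.reindex (eqv i₀ j₀ hne) (eqv i₀ j₀ hne) (Matrix.fromBlocks 1 0 0 S') := by
          rw [hNdef, Matrix.transpose_mul]
          noncomm_ring
        have hmul : (Matrix.reindex (eqv i₀ j₀ hne) (eqv i₀ j₀ hne)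
              (Matrix.fromBlocks 1 0 0 S'))ᵀ * N *
              Matrix.reindex (eqv i₀ j₀ hne) (eqv i₀ j₀ hne) (Matrix.fromBlocks 1 0 0 S') =
            Matrix.reindex (eqv i₀ j₀ hne) (eqv i₀ j₀ hne)
              (Matrix.fromBlocks !![0, 1; 1, 0] 0 0 (S'ᵀ * M' * S')) := by
          rw [hPt, hNre]
          simp only [Matrix.reindex_apply, Matrix.submatrix_mul_equiv]
          congr 1
          rw [Matrix.fromBlocks_multiply, Matrix.fromBlocks_multiply]
          simp [Matrix.mul_assoc]
        rw [key, hmul, hS'eq]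
        ext i j
        simp only [Matrix.reindex_apply, Matrix.submatrix_apply]
        rcases hi : (eqv i₀ j₀ hne).symm i with s | k' <;>
          rcases hj : (eqv i₀ j₀ hne).symm j with t | l' <;>
          simp only [Equiv.symm_trans_apply, Equiv.coe_fn_symm_mk, hi, hj, Sum.elim_inl,
            Sum.elim_inr, Equiv.prodComm_symm, Equiv.coe_prodComm, Prod.swap_prod_mk,
            Matrix.fromBlocks_apply₁₁, Matrix.fromBlocks_apply₁₂, Matrix.fromBlocks_apply₂₁,
            Matrix.fromBlocks_apply₂₂, Matrix.reindex_apply, Matrix.submatrix_apply,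
            Matrix.blockDiagonal_apply, Prod.fst_swap, Prod.snd_swap, Prod.swap]
        · simp
        · rw [if_neg (Ne.symm (Fin.succ_ne_zero _))]
          simp
        · simp [Fin.succ_ne_zero]
        · simp [Fin.succ_inj]

end Stmt14Aux

/-- Every nonsingular alternating symmetric bilinear form over `𝔽₂` is congruent to an
orthogonal sum of hyperbolic planes; in particular its dimension is even. -/
theorem stmt_14 (n : ℕ) (M : Matrix (Fin n) (Fin n) (ZMod 2))
    (hsymm : Mᵀ = M) (hdet : IsUnit M.det) (hdiag : ∀ i, M i i = 0) :
    ∃ m : ℕ, n = 2 * m ∧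
      ∃ (e : Fin m × Fin 2 ≃ Fin n) (S : Matrix (Fin n) (Fin n) (ZMod 2)),
        IsUnit S.det ∧
          Sᵀ * M * S =
            Matrix.reindex ((Equiv.prodComm (Fin 2) (Fin m)).trans e)
              ((Equiv.prodComm (Fin 2) (Fin m)).trans e)
              (Matrix.blockDiagonal fun _ : Fin m => (!![0, 1; 1, 0] : Matrix (Fin 2) (Fin 2) (ZMod 2))) := by
  obtain ⟨m, hm, e, S, h1, h2⟩ :=
    Stmt14Aux.core n (Fin n) (by simp) M hsymm hdet hdiag
  exact ⟨m, by simpa using hm, e, S, h1, h2⟩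
end

section
/- Let n : ℕ and let M : Matrix (Fin n) (Fin n) (ZMod 2) be symmetric with IsUnit M.det, and suppose M is not alternating, i.e. there exists i with M i i = 1. Then there exists S : Matrix (Fin n) (Fin n) (ZMod 2) with IsUnit S.det such that Sᵀ * M * S = 1 (the identity matrix). That is, every nonsingular nonalternating symmetric bilinear form over 𝔽₂ admits an orthonormal basis. -/
open Matrix

namespace Stmt15Aux

lemma z2_cases (x : ZMod 2) : x = 0 ∨ x = 1 := by revert x; decide

lemma z2_ne_zero {x : ZMod 2} (h : x ≠ 0) : x = 1 := by revert h; revert x; decide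

lemma congr_symm {n : ℕ} {M C : Matrix (Fin n) (Fin n) (ZMod 2)} (hs : Mᵀ = M) :
    (Cᵀ * M * C)ᵀ = Cᵀ * M * C := by
  rw [transpose_mul, transpose_mul, transpose_transpose, hs, ← Matrix.mul_assoc]

lemma congr_det {n : ℕ} {M C : Matrix (Fin n) (Fin n) (ZMod 2)}
    (hd : IsUnit M.det) (hC : IsUnit C.det) : IsUnit (Cᵀ * M * C).det := by
  rw [det_mul, det_mul, det_transpose]
  exact (hC.mul hd).mul hC

lemma comp {n : ℕ} {M N P : Matrix (Fin n) (Fin n) (ZMod 2)}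
    (h1 : ∃ S, IsUnit S.det ∧ Sᵀ * M * S = N)
    (h2 : ∃ S, IsUnit S.det ∧ Sᵀ * N * S = P) :
    ∃ S, IsUnit S.det ∧ Sᵀ * M * S = P := by
  obtain ⟨S₁, h1d, rfl⟩ := h1
  obtain ⟨S₂, h2d, h2⟩ := h2
  refine ⟨S₁ * S₂, by rw [det_mul]; exact h1d.mul h2d, ?_⟩
  rw [← h2, transpose_mul]
  simp only [Matrix.mul_assoc]

/-- Congruence by the elementary matrix `C = 1 + X`, `X k l = [k = p] * c l`, where
`c p = 0`.  This adds multiples of the `p`-th basis vector to the other basis vectors. -/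
lemma congruence_step {n : ℕ} (M : Matrix (Fin n) (Fin n) (ZMod 2))
    (p : Fin n) (c : Fin n → ZMod 2) (hc : c p = 0) :
    ∃ C : Matrix (Fin n) (Fin n) (ZMod 2), IsUnit C.det ∧
      ∀ a b, (Cᵀ * M * C) a b =
        M a b + M a p * c b + c a * M p b + c a * M p p * c b := by
  set X : Matrix (Fin n) (Fin n) (ZMod 2) :=
    fun k l => (if k = p then 1 else 0) * c l with hX
  have hXa : ∀ k l, X k l = (if k = p then 1 else 0) * c l := fun _ _ => rfl
  have hMX : ∀ (A : Matrix (Fin n) (Fin n) (ZMod 2)) a b, (A * X) a b = A a p * c b := by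
    intro A a b
    rw [mul_apply, Finset.sum_eq_single p]
    · simp [hXa]
    · intro k _ hk; simp [hXa, hk]
    · simp
  have hXtM : ∀ (A : Matrix (Fin n) (Fin n) (ZMod 2)) a b, (Xᵀ * A) a b = c a * A p b := by
    intro A a b
    rw [mul_apply, Finset.sum_eq_single p]
    · simp [transpose_apply, hXa, mul_comm]
    · intro k _ hk; simp [transpose_apply, hXa, hk]
    · simp
  have hXX : X * X = 0 := by
    ext a b
    rw [hMX]
    simp [hXa, hc]
  have hXpX : X + X = 0 := by
    ext a b
    rw [Matrix.add_apply]
    exact (by decide : ∀ x : ZMod 2, x + x = 0) _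
  have hCC : (1 + X) * (1 + X) = 1 := by
    have h : (1 + X) * (1 + X) = 1 + (X + X) + X * X := by noncomm_ring
    rw [h, hXpX, hXX, add_zero, add_zero]
  refine ⟨1 + X, ?_, ?_⟩
  · exact IsUnit.of_mul_eq_one _ (by rw [← det_mul, hCC, det_one])
  · intro a b
    have expand : (1 + X)ᵀ * M * (1 + X) = M + M * X + Xᵀ * M + Xᵀ * (M * X) := by
      rw [transpose_add, transpose_one]
      noncomm_ring
    rw [expand]
    simp only [Matrix.add_apply]
    rw [hMX, hXtM, hXtM]
    rw [hMX]
    ring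

/-- The reindexing equivalence that moves index `p` to the `PUnit` slot. -/
def es {m : ℕ} (p : Fin (m + 1)) : Fin (m + 1) ≃ (Fin m) ⊕ Unit :=
  (finSuccEquiv' p).trans (Equiv.optionEquivSumPUnit (Fin m))

lemma block_decomp {m : ℕ} (N : Matrix (Fin (m + 1)) (Fin (m + 1)) (ZMod 2))
    (hs : Nᵀ = N) (p : Fin (m + 1)) (hpp : N p p = 1)
    (hrow : ∀ l, l ≠ p → N p l = 0) :
    N = (fromBlocks (N.submatrix p.succAbove p.succAbove) 0 0 1).submatrix (es p) (es p) := by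
  have hcol : ∀ l, l ≠ p → N l p = 0 := by
    intro l hl
    have := congrFun (congrFun hs p) l
    rw [transpose_apply] at this
    rw [this, hrow l hl]
  ext a b
  rcases eq_or_ne a p with ha | ha
  · rcases eq_or_ne b p with hb | hb
    · rw [ha, hb]
      simp [es, submatrix_apply, finSuccEquiv'_at, hpp]
    · obtain ⟨j, hj⟩ := Fin.exists_succAbove_eq hb
      rw [ha, ← hj]
      simp [es, submatrix_apply, finSuccEquiv'_at, finSuccEquiv'_succAbove,
        hrow _ (Fin.succAbove_ne p j)]
  · obtain ⟨i, hi⟩ := Fin.exists_succAbove_eq ha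
    rcases eq_or_ne b p with hb | hb
    · rw [hb, ← hi]
      simp [es, submatrix_apply, finSuccEquiv'_at, finSuccEquiv'_succAbove,
        hcol _ (Fin.succAbove_ne p i)]
    · obtain ⟨j, hj⟩ := Fin.exists_succAbove_eq hb
      rw [← hi, ← hj]
      simp [es, submatrix_apply, finSuccEquiv'_succAbove]

lemma block_det {m : ℕ} (N : Matrix (Fin (m + 1)) (Fin (m + 1)) (ZMod 2))
    (hs : Nᵀ = N) (hd : IsUnit N.det) (p : Fin (m + 1)) (hpp : N p p = 1)
    (hrow : ∀ l, l ≠ p → N p l = 0) :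
    IsUnit (N.submatrix p.succAbove p.succAbove).det := by
  have key := block_decomp N hs p hpp hrow
  rw [key, det_submatrix_equiv_self, det_fromBlocks_zero₂₁, det_one, mul_one] at hd
  exact hd

lemma block_step {m : ℕ} (N : Matrix (Fin (m + 1)) (Fin (m + 1)) (ZMod 2))
    (hs : Nᵀ = N) (hd : IsUnit N.det) (p : Fin (m + 1)) (hpp : N p p = 1)
    (hrow : ∀ l, l ≠ p → N p l = 0)
    (ih : ∀ M' : Matrix (Fin m) (Fin m) (ZMod 2), M'ᵀ = M' → IsUnit M'.det →
      (∃ i, M' i i = 1) → ∃ S, IsUnit S.det ∧ Sᵀ * M' * S = 1)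
    (hq : ∃ q, q ≠ p ∧ N q q = 1) :
    ∃ S, IsUnit S.det ∧ Sᵀ * N * S = 1 := by
  set M' := N.submatrix p.succAbove p.succAbove with hM'
  have key := block_decomp N hs p hpp hrow
  have hd' : IsUnit M'.det := block_det N hs hd p hpp hrow
  have hs' : M'ᵀ = M' := by
    ext i j
    have := congrFun (congrFun hs (p.succAbove j)) (p.succAbove i)
    rw [transpose_apply] at this
    simpa [hM', submatrix_apply] using this.symm
  have hna' : ∃ i, M' i i = 1 := by
    obtain ⟨q, hqp, hq1⟩ := hq
    obtain ⟨i, rfl⟩ := Fin.exists_succAbove_eq hqp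
    exact ⟨i, hq1⟩
  obtain ⟨S', hS'd, hS'⟩ := ih M' hs' hd' hna'
  refine ⟨(fromBlocks S' 0 0 1).submatrix (es p) (es p), ?_, ?_⟩
  · rw [det_submatrix_equiv_self, det_fromBlocks_zero₂₁, det_one, mul_one]
    exact hS'd
  · rw [key, transpose_submatrix, fromBlocks_transpose, transpose_zero, transpose_zero,
      transpose_one, submatrix_mul_equiv, submatrix_mul_equiv, fromBlocks_multiply,
      fromBlocks_multiply]
    simp only [Matrix.mul_zero, Matrix.zero_mul, Matrix.mul_one, Matrix.one_mul,
      add_zero, zero_add, hS']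
    rw [← hM', hS', fromBlocks_one, submatrix_one_equiv]

lemma aux : ∀ n (M : Matrix (Fin n) (Fin n) (ZMod 2)), Mᵀ = M → IsUnit M.det →
    (∃ i, M i i = 1) → ∃ S, IsUnit S.det ∧ Sᵀ * M * S = 1 := by
  intro n
  induction n with
  | zero => rintro M _ _ ⟨i, _⟩; exact i.elim0
  | succ m ih =>
    rintro M hs hd ⟨i, hi⟩
    have hsym : ∀ a b, M a b = M b a := by
      intro a b
      have := congrFun (congrFun hs b) a
      rwa [transpose_apply] at this
    -- Step 1: clear row and column i
    obtain ⟨C, hCd, hCform⟩ := congruence_step M i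
      (fun a => if a = i then 0 else M i a) (by simp)
    set N₁ := Cᵀ * M * C with hN₁
    have hN₁s : N₁ᵀ = N₁ := congr_symm hs
    have hN₁d : IsUnit N₁.det := congr_det hd hCd
    have hN₁pp : N₁ i i = 1 := by
      rw [hCform, if_pos rfl, hi]
      decide
    have hN₁row : ∀ l, l ≠ i → N₁ i l = 0 := by
      intro l hl
      rw [hCform, if_pos rfl, if_neg hl, hi]
      exact (by decide : ∀ x : ZMod 2, x + 1 * x + 0 * x + 0 * 1 * x = 0) (M i l)
    have hN₁sym : ∀ a b, N₁ a b = N₁ b a := by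
      intro a b
      have := congrFun (congrFun hN₁s b) a
      rwa [transpose_apply] at this
    have hN₁diag : ∀ a, a ≠ i → N₁ a a = M a a + M i a := by
      intro a ha
      rw [hCform, if_neg ha, hsym a i, hi]
      exact (by decide : ∀ x y : ZMod 2, y + x * x + x * x + x * 1 * x = y + x) (M i a) (M a a)
    have base : ∃ S, IsUnit S.det ∧ Sᵀ * M * S = N₁ := ⟨C, hCd, rfl⟩
    by_cases hex : ∃ q, q ≠ i ∧ N₁ q q = 1
    · exact comp base (block_step N₁ hN₁s hN₁d i hN₁pp hN₁row ih hex)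
    · push_neg at hex
      have hall : ∀ q, q ≠ i → N₁ q q = 0 := by
        intro q hq
        rcases z2_cases (N₁ q q) with h | h
        · exact h
        · exact absurd h (hex q hq)
      rcases Nat.eq_zero_or_pos m with hm | hm
      · -- n = 1 : N₁ is the 1×1 identity
        subst hm
        have : N₁ = 1 := by
          ext a b
          have ha : a = i := by
            have h1 := a.isLt; have h2 := i.isLt
            exact Fin.ext (by omega)
          have hb : b = i := by
            have h1 := b.isLt; have h2 := i.isLt
            exact Fin.ext (by omega)
          rw [ha, hb, hN₁pp, Matrix.one_apply_eq]
        exact ⟨C, hCd, this⟩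
      · -- the complement is alternating; find an off-diagonal 1 and fix up
        set M' := N₁.submatrix i.succAbove i.succAbove with hM'
        have hd' : IsUnit M'.det := block_det N₁ hN₁s hN₁d i hN₁pp hN₁row
        have hM'ne : M' ≠ 0 := by
          intro h0
          rw [h0, (haveI : Nonempty (Fin m) := ⟨⟨0, hm⟩⟩; det_zero)] at hd'
          simp [isUnit_zero_iff] at hd' 
        have : ∃ j' k', M' j' k' ≠ 0 := by
          by_contra hcon
          push_neg at hcon
          exact hM'ne (by ext a b; simpa using hcon a b)
        obtain ⟨j', k', hne0⟩ := this
        have hjk1 : N₁ (i.succAbove j') (i.succAbove k') = 1 := z2_ne_zero hne0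
        set j := i.succAbove j' with hj
        set k := i.succAbove k' with hk
        have hji : j ≠ i := Fin.succAbove_ne i j'
        have hki : k ≠ i := Fin.succAbove_ne i k'
        have hjk : j ≠ k := by
          intro h
          rw [← h] at hjk1
          rw [hall j hji] at hjk1
          exact absurd hjk1 (by decide)
        -- Step 2: add e_i to basis vector j
        obtain ⟨T, hTd, hTform⟩ := congruence_step N₁ i
          (fun a => if a = j then 1 else 0) (by simp [Ne.symm hji])
        set N₂ := Tᵀ * N₁ * T with hN₂
        have hN₂s : N₂ᵀ = N₂ := congr_symm hN₁s
        have hN₂d : IsUnit N₂.det := congr_det hN₁d hTd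
        have hN₂sym : ∀ a b, N₂ a b = N₂ b a := by
          intro a b
          have := congrFun (congrFun hN₂s b) a
          rwa [transpose_apply] at this
        have hN₂jj : N₂ j j = 1 := by
          rw [hTform, if_pos rfl, hall j hji, hN₁sym j i, hN₁row j hji, hN₁pp]
          decide
        have hN₂jk : N₂ j k = 1 := by
          rw [hTform, if_pos rfl, if_neg (Ne.symm hjk), hN₁sym j i, hN₁row j hji,
            hN₁row k hki, hjk1, hN₁pp]
          decide
        have hN₂kk : N₂ k k = 0 := by
          rw [hTform, if_neg (Ne.symm hjk), hall k hki]
          exact (by decide : ∀ x y z : ZMod 2, 0 + x * 0 + 0 * y + 0 * z * 0 = 0) _ _ _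
        -- Step 3: clear row and column j
        obtain ⟨C₂, hC₂d, hC₂form⟩ := congruence_step N₂ j
          (fun a => if a = j then 0 else N₂ j a) (by simp)
        set N₃ := C₂ᵀ * N₂ * C₂ with hN₃
        have hN₃s : N₃ᵀ = N₃ := congr_symm hN₂s
        have hN₃d : IsUnit N₃.det := congr_det hN₂d hC₂d
        have hN₃jj : N₃ j j = 1 := by
          rw [hC₂form, if_pos rfl, hN₂jj]
          decide
        have hN₃row : ∀ l, l ≠ j → N₃ j l = 0 := by
          intro l hl
          rw [hC₂form, if_pos rfl, if_neg hl, hN₂jj]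
          exact (by decide : ∀ x : ZMod 2, x + 1 * x + 0 * x + 0 * 1 * x = 0) (N₂ j l)
        have hN₃kk : N₃ k k = 1 := by
          rw [hC₂form, if_neg (Ne.symm hjk), hN₂kk, hN₂sym k j, hN₂jk, hN₂jj]
          decide
        have step12 : ∃ S, IsUnit S.det ∧ Sᵀ * M * S = N₂ :=
          comp base ⟨T, hTd, rfl⟩
        have step123 : ∃ S, IsUnit S.det ∧ Sᵀ * M * S = N₃ :=
          comp step12 ⟨C₂, hC₂d, rfl⟩
        exact comp step123
          (block_step N₃ hN₃s hN₃d j hN₃jj hN₃row ih ⟨k, hjk.symm, hN₃kk⟩)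

end Stmt15Aux

/-- Every nonsingular nonalternating symmetric bilinear form over `𝔽₂` admits an
orthonormal basis. -/
theorem stmt_15 (n : ℕ) (M : Matrix (Fin n) (Fin n) (ZMod 2))
    (hsymm : Mᵀ = M) (hdet : IsUnit M.det) (hnonalt : ∃ i, M i i = 1) :
    ∃ S : Matrix (Fin n) (Fin n) (ZMod 2), IsUnit S.det ∧ Sᵀ * M * S = 1 :=
  Stmt15Aux.aux n M hsymm hdet hnonalt
end

section
/- Let V be a finite-dimensional vector space over the field ZMod 2 and let B : V →ₗ[ZMod 2] V →ₗ[ZMod 2] ZMod 2 be a symmetric bilinear form (B v w = B w v) which is nondegenerate (for every v, if B v w = 0 for all w then v = 0). Then there exists a unique element c : V such that B v v = B c v for every v : V; moreover c = 0 if and only if B is alternating (B v v = 0 for all v). In particular v ↦ B v v is ZMod 2-linear. -/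
/-- The characteristic element of a nondegenerate symmetric bilinear form over `𝔽₂`:
there is a unique `c` with `B v v = B c v` for all `v`; it vanishes iff `B` is
alternating; and `v ↦ B v v` is linear. -/
theorem stmt_16 (V : Type*) [AddCommGroup V] [Module (ZMod 2) V]
    [FiniteDimensional (ZMod 2) V]
    (B : V →ₗ[ZMod 2] V →ₗ[ZMod 2] ZMod 2)
    (hsymm : ∀ v w : V, B v w = B w v)
    (hnd : ∀ v : V, (∀ w : V, B v w = 0) → v = 0) :
    (∃! c : V, ∀ v : V, B v v = B c v) ∧
      (∀ c : V, (∀ v : V, B v v = B c v) → (c = 0 ↔ ∀ v : V, B v v = 0)) ∧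
      IsLinearMap (ZMod 2) fun v : V => B v v := by
  have hlin : IsLinearMap (ZMod 2) fun v : V => B v v := by
    constructor
    · intro v w
      have h2 : B v w + B w v = 0 := by
        rw [hsymm v w]
        have : ∀ a : ZMod 2, a + a = 0 := by decide
        exact this _
      simp only [map_add, LinearMap.add_apply]
      linear_combination h2
    · intro a v
      have ha : a * a = a := by revert a; decide
      simp only [map_smul, LinearMap.smul_apply, smul_eq_mul]
      rw [← mul_assoc, ha]
  set Q : V →ₗ[ZMod 2] ZMod 2 := hlin.mk' _ with hQ
  have hndB : LinearMap.BilinForm.Nondegenerate B :=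
    ⟨fun v h => hnd v h, fun v h => hnd v (fun w => by rw [hsymm]; exact h w)⟩
  set c := (LinearMap.BilinForm.toDual B hndB).symm Q with hc
  have hcv : ∀ v : V, B v v = B c v := by
    intro v
    have := (LinearMap.BilinForm.toDual B hndB).apply_symm_apply Q
    have h2 : B c = Q := this
    rw [h2]
    rfl
  have huniq : ∀ c' : V, (∀ v : V, B v v = B c' v) → c' = c := by
    intro c' h'
    have : ∀ w, B (c' - c) w = 0 := by
      intro w
      simp only [map_sub, LinearMap.sub_apply]
      rw [← h' w, ← hcv w]
      ring
    have := hnd _ this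
    exact sub_eq_zero.mp this
  refine ⟨⟨c, hcv, huniq⟩, ?_, hlin⟩
  intro c' h'
  constructor
  · intro h0 v; rw [h' v, h0]; simp
  · intro hall
    apply hnd
    intro w
    rw [← h' w, hall w]
end

section
/- Let r ≥ 1 and let a : Fin r → ℤ satisfy a i ≥ 2 for all i. Define v : Fin r → ℚ backwards by v (r−1) := a (r−1) and v j := a j − 1 / (v (j+1)) for j < r−1 (then v j > 1 for all j, so all v j are nonzero and the recursion is well-defined). Let m, q : ℤ with m > q > 0, Int.gcd m q = 1, and v 0 = (m : ℚ) / q. Let C : Matrix (Fin r) (Fin r) ℤ be the tridiagonal matrix with C i i = a i, C i j = 1 whenever the indices i, j are adjacent (|i − j| = 1), and C i j = 0 otherwise. Then C.det = m, and the (0,0) entry of the inverse of C over ℚ satisfies ((C.map (Int.cast : ℤ → ℚ))⁻¹) 0 0 = (q : ℚ) / m. In particular C presents the cyclic linking pairing ⟨q/m⟩ on ℤ/m. -/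
open Matrix

def triMat (n : ℕ) (b : Fin n → ℤ) : Matrix (Fin n) (Fin n) ℤ :=
  Matrix.of fun i j => if i = j then b i
    else if (i : ℕ) + 1 = (j : ℕ) ∨ (j : ℕ) + 1 = (i : ℕ) then 1 else 0

lemma triMat_apply (n : ℕ) (b : Fin n → ℤ) (i j : Fin n) :
    triMat n b i j = if (i : ℕ) = (j : ℕ) then b i
      else if (i : ℕ) + 1 = (j : ℕ) ∨ (j : ℕ) + 1 = (i : ℕ) then 1 else 0 := by
  simp [triMat, Fin.ext_iff]

lemma triMat_sub0 (n : ℕ) (b : Fin (n + 1) → ℤ) :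
    (triMat (n + 1) b).submatrix Fin.succ ((0 : Fin (n + 1)).succAbove)
      = triMat n (b ∘ Fin.succ) := by
  ext i j
  simp only [Matrix.submatrix_apply, Fin.zero_succAbove, triMat_apply, Fin.val_succ,
    Function.comp_apply]
  by_cases h : (i : ℕ) = (j : ℕ)
  · simp [h]
  · rw [if_neg (by omega), if_neg h]
    exact if_congr (by omega) rfl rfl

lemma one_succAbove_val (n : ℕ) (x : Fin (n + 1)) :
    (((1 : Fin (n + 2)).succAbove x) : ℕ) = if (x : ℕ) = 0 then 0 else (x : ℕ) + 1 := by
  rw [Fin.succAbove]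
  split <;> rename_i h
  · simp only [Fin.lt_def, Fin.coe_castSucc, Fin.val_one] at h
    simp [Fin.coe_castSucc, Nat.lt_one_iff.mp h]
  · simp only [Fin.lt_def, Fin.coe_castSucc, Fin.val_one, not_lt] at h
    rw [Fin.val_succ, if_neg (by omega)]

lemma triMat_sub1 (n : ℕ) (b : Fin (n + 2) → ℤ) :
    ((triMat (n + 2) b).submatrix (Fin.succ ∘ Fin.succ) ((1 : Fin (n + 2)).succAbove ∘ Fin.succ))
      = triMat n (b ∘ Fin.succ ∘ Fin.succ) := by
  ext i j
  simp only [Matrix.submatrix_apply, triMat_apply, Fin.val_succ,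
    Function.comp_apply, one_succAbove_val, Nat.succ_ne_zero, if_false]
  by_cases h : (i : ℕ) = (j : ℕ)
  · simp [h]
  · rw [if_neg (by omega), if_neg h]
    exact if_congr (by omega) rfl rfl

lemma det_triMat_sub1 (n : ℕ) (b : Fin (n + 2) → ℤ) :
    ((triMat (n + 2) b).submatrix Fin.succ ((1 : Fin (n + 2)).succAbove)).det
      = (triMat n (b ∘ Fin.succ ∘ Fin.succ)).det := by
  have h10 : triMat (n + 2) b 1 0 = 1 := by
    rw [triMat_apply, if_neg (by simp), if_pos (by simp)]
  have hk0 : ∀ k : Fin n, triMat (n + 2) b k.succ.succ 0 = 0 := by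
    intro k
    rw [triMat_apply, if_neg (by simp), if_neg (by simp [Fin.val_succ])]
  rw [Matrix.det_succ_column_zero, Fin.sum_univ_succ]
  simp [Matrix.submatrix_submatrix, h10, hk0, triMat_sub1 n b]

def cont : (n : ℕ) → (Fin n → ℤ) → ℤ
  | 0, _ => 1
  | 1, b => b 0
  | (n + 2), b => b 0 * cont (n + 1) (b ∘ Fin.succ) - cont n (b ∘ Fin.succ ∘ Fin.succ)

lemma det_triMat_rec (n : ℕ) (b : Fin (n + 2) → ℤ) :
    (triMat (n + 2) b).det = b 0 * (triMat (n + 1) (b ∘ Fin.succ)).det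
      - (triMat n (b ∘ Fin.succ ∘ Fin.succ)).det := by
  have h00 : triMat (n + 2) b 0 0 = b 0 := by
    rw [triMat_apply, if_pos rfl]
  have h01 : triMat (n + 2) b 0 1 = 1 := by
    rw [triMat_apply, if_neg (by simp), if_pos (by simp)]
  have h0k : ∀ k : Fin n, triMat (n + 2) b 0 k.succ.succ = 0 := by
    intro k
    rw [triMat_apply, if_neg (by simp), if_neg (by simp [Fin.val_succ])]
  rw [Matrix.det_succ_row_zero, Fin.sum_univ_succ, Fin.sum_univ_succ]
  simp only [Fin.val_zero, pow_zero, one_mul, h00, Fin.succ_zero_eq_one, Fin.val_one,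
    pow_one, h01, h0k, mul_zero, zero_mul, Finset.sum_const_zero, add_zero, mul_one,
    neg_one_mul, neg_mul]
  rw [triMat_sub0, det_triMat_sub1]
  ring

lemma det_triMat : ∀ (n : ℕ) (b : Fin n → ℤ), (triMat n b).det = cont n b
  | 0, b => by simp [cont]
  | 1, b => by
      rw [Matrix.det_fin_one, cont]
      rw [triMat_apply, if_pos rfl]
  | (n + 2), b => by
      rw [det_triMat_rec, det_triMat (n + 1), det_triMat n, cont]

lemma cont_coprime : ∀ (n : ℕ) (b : Fin (n + 1) → ℤ),
    IsCoprime (cont (n + 1) b) (cont n (b ∘ Fin.succ))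
  | 0, b => by simpa [cont] using isCoprime_one_right
  | (n + 1), b => by
      have h := (cont_coprime n (b ∘ Fin.succ)).symm.neg_left.add_mul_left_left (b 0)
      have e : -cont n ((b ∘ Fin.succ) ∘ Fin.succ) + cont (n + 1) (b ∘ Fin.succ) * b 0
          = cont (n + 2) b := by
        show -cont n (b ∘ Fin.succ ∘ Fin.succ) + cont (n + 1) (b ∘ Fin.succ) * b 0 = _
        rw [show cont (n + 2) b = b 0 * cont (n + 1) (b ∘ Fin.succ)
          - cont n (b ∘ Fin.succ ∘ Fin.succ) from rfl]
        ring
      rwa [e] at h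

lemma hw_shift (n : ℕ) (b : Fin (n + 1) → ℤ) (w : Fin (n + 1) → ℚ)
    (hw : ∀ j : Fin (n + 1), w j = (b j : ℚ)
      - if h : (j : ℕ) + 1 < n + 1 then 1 / w ⟨(j : ℕ) + 1, h⟩ else 0) :
    ∀ j : Fin n, (w ∘ Fin.succ) j = ((b ∘ Fin.succ) j : ℚ)
      - if h : (j : ℕ) + 1 < n then 1 / (w ∘ Fin.succ) ⟨(j : ℕ) + 1, h⟩ else 0 := by
  intro j
  have := hw j.succ
  simp only [Fin.val_succ] at this
  simp only [Function.comp_apply]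
  rw [this]
  congr 1
  by_cases h : (j : ℕ) + 1 < n
  · rw [dif_pos (by omega), dif_pos h]
    congr 1
  · rw [dif_neg (by omega), dif_neg h]

lemma cont_spec : ∀ (n : ℕ) (b : Fin n → ℤ), (∀ i, 2 ≤ b i) → ∀ (w : Fin n → ℚ),
    (∀ j : Fin n, w j = (b j : ℚ)
      - if h : (j : ℕ) + 1 < n then 1 / w ⟨(j : ℕ) + 1, h⟩ else 0) →
    (∀ j, 1 < w j) ∧ ((cont n b : ℚ) = ∏ j, w j)
  | 0, b, hb, w, hw => ⟨fun j => j.elim0, by simp [cont]⟩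
  | 1, b, hb, w, hw => by
      have h0 : w 0 = (b 0 : ℚ) := by
        rw [hw 0, dif_neg (by omega), sub_zero]
      constructor
      · intro j
        have : j = 0 := Subsingleton.elim j 0
        rw [this, h0]
        exact_mod_cast lt_of_lt_of_le one_lt_two (by exact_mod_cast hb 0)
      · rw [show cont 1 b = b 0 from rfl, Fin.prod_univ_one, h0]
  | (n + 2), b, hb, w, hw => by
      have hb' : ∀ i, 2 ≤ (b ∘ Fin.succ) i := fun i => hb _
      have hw' := hw_shift (n + 1) b w hw
      obtain ⟨hpos', hprod'⟩ := cont_spec (n + 1) (b ∘ Fin.succ) hb' (w ∘ Fin.succ) hw'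
      obtain ⟨_, hprod''⟩ := cont_spec n (b ∘ Fin.succ ∘ Fin.succ) (fun i => hb _)
        (w ∘ Fin.succ ∘ Fin.succ) (hw_shift n (b ∘ Fin.succ) (w ∘ Fin.succ) hw')
      have hw1 : 1 < w 1 := by
        have := hpos' 0
        simpa using this
      have hw1ne : w 1 ≠ 0 := by positivity
      have hw0 : w 0 = (b 0 : ℚ) - 1 / w 1 := by
        rw [hw 0, dif_pos (by simp)]
        have h1 : ∀ (h : ((0 : Fin (n + 2)) : ℕ) + 1 < n + 2),
            (⟨((0 : Fin (n + 2)) : ℕ) + 1, h⟩ : Fin (n + 2)) = 1 := fun h => Fin.ext (by simp)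
        rw [h1]
      have hpos0 : 1 < w 0 := by
        have hb0 : (2 : ℚ) ≤ (b 0 : ℚ) := by exact_mod_cast hb 0
        have : 1 / w 1 < 1 := by
          rw [div_lt_one (by linarith)]; linarith
        have h2 : 0 < 1 / w 1 := by positivity
        rw [hw0]; linarith
      refine ⟨fun j => ?_, ?_⟩
      · rcases Fin.eq_zero_or_eq_succ j with h | ⟨k, rfl⟩
        · rw [h]; exact hpos0
        · exact hpos' k
      · have e1 : (∏ j, w j) = w 0 * ∏ j : Fin (n + 1), (w ∘ Fin.succ) j :=
          Fin.prod_univ_succ w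
        have e2 : (∏ j : Fin (n + 1), (w ∘ Fin.succ) j)
            = w 1 * ∏ j : Fin n, (w ∘ Fin.succ ∘ Fin.succ) j := by
          rw [Fin.prod_univ_succ]
          simp [Fin.succ_zero_eq_one]
        rw [show cont (n + 2) b = b 0 * cont (n + 1) (b ∘ Fin.succ)
          - cont n (b ∘ Fin.succ ∘ Fin.succ) from rfl]
        push_cast
        rw [hprod', hprod'', e1, e2, hw0]
        field_simp

/-- Hirzebruch–Jung continued fractions and linear plumbing matrices: if
`m/q = [a₁,…,a_r]` with all `aᵢ ≥ 2`, then the associated tridiagonal matrix `C`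
has determinant `m` and `(C⁻¹)₀₀ = q/m`; i.e. `C` presents the cyclic linking
pairing `⟨q/m⟩` on `ℤ/m`. -/
theorem stmt_18 (r : ℕ) (hr : 1 ≤ r) (a : Fin r → ℤ) (ha : ∀ i, 2 ≤ a i)
    (v : Fin r → ℚ)
    (hv_last : v ⟨r - 1, by omega⟩ = (a ⟨r - 1, by omega⟩ : ℚ))
    (hv_rec : ∀ (j : ℕ) (h : j + 1 < r),
      v ⟨j, by omega⟩ = (a ⟨j, by omega⟩ : ℚ) - 1 / v ⟨j + 1, h⟩)
    (m q : ℤ) (hmq : q < m) (hq : 0 < q) (hgcd : Int.gcd m q = 1)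
    (hv0 : v ⟨0, hr⟩ = (m : ℚ) / (q : ℚ))
    (C : Matrix (Fin r) (Fin r) ℤ)
    (hC : ∀ i j : Fin r,
      C i j = if i = j then a i
        else if (i : ℕ) + 1 = (j : ℕ) ∨ (j : ℕ) + 1 = (i : ℕ) then 1 else 0) :
    C.det = m ∧
      ((C.map (Int.cast : ℤ → ℚ))⁻¹) ⟨0, hr⟩ ⟨0, hr⟩ = (q : ℚ) / (m : ℚ) := by
  obtain ⟨s, rfl⟩ : ∃ s, r = s + 1 := ⟨r - 1, by omega⟩
  -- identify C with triMat
  have hCeq : C = triMat (s + 1) a := by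
    ext i j
    rw [hC i j]
    rfl
  -- unified recursion hypothesis
  have hw : ∀ j : Fin (s + 1), v j = (a j : ℚ)
      - if h : (j : ℕ) + 1 < s + 1 then 1 / v ⟨(j : ℕ) + 1, h⟩ else 0 := by
    intro j
    by_cases h : (j : ℕ) + 1 < s + 1
    · rw [dif_pos h]
      have := hv_rec (j : ℕ) h
      simpa using this
    · rw [dif_neg h, sub_zero]
      have hj : j = ⟨s + 1 - 1, by omega⟩ := Fin.ext (by simp; omega)
      rw [hj, hv_last]
  obtain ⟨hpos, hprod⟩ := cont_spec (s + 1) a ha v hw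
  have hw' := hw_shift s a v hw
  obtain ⟨hpos', hprod'⟩ := cont_spec s (a ∘ Fin.succ) (fun i => ha _) (v ∘ Fin.succ) hw'
  set M := cont (s + 1) a with hM
  set N := cont s (a ∘ Fin.succ) with hN
  have hv00 : v 0 = (m : ℚ) / (q : ℚ) := by
    rw [show (0 : Fin (s + 1)) = ⟨0, hr⟩ from Fin.ext (by simp)]
    exact hv0
  have hq0 : (q : ℚ) ≠ 0 := by exact_mod_cast hq.ne'
  have hm0 : (0 : ℤ) < m := lt_trans hq hmq
  have hmQ : (m : ℚ) ≠ 0 := by exact_mod_cast hm0.ne'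
  -- key identity q * M = m * N
  have hMQ : (M : ℚ) = (m : ℚ) / q * (N : ℚ) := by
    rw [hprod, hprod', Fin.prod_univ_succ, hv00]
    rfl
  have hqM : q * M = m * N := by
    have : (q : ℚ) * (M : ℚ) = (m : ℚ) * (N : ℚ) := by
      rw [hMQ]; field_simp
    exact_mod_cast this
  have hcop_mq : IsCoprime m q := Int.isCoprime_iff_gcd_eq_one.mpr hgcd
  have hcop_MN : IsCoprime M N := cont_coprime s a
  have hmM : m ∣ M := hcop_mq.dvd_of_dvd_mul_left ⟨N, hqM⟩
  have hMm : M ∣ m := hcop_MN.dvd_of_dvd_mul_right ⟨q, by linarith [hqM]⟩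
  have hMpos : (0 : ℤ) < M := by
    have : (0 : ℚ) < (M : ℚ) := by
      rw [hprod]
      exact Finset.prod_pos fun j _ => lt_trans one_pos (hpos j)
    exact_mod_cast this
  have hMeqm : M = m := Int.dvd_antisymm hMpos.le hm0.le hMm hmM
  have hNeqq : N = q := by
    have := hqM
    rw [hMeqm] at this
    exact mul_left_cancel₀ hm0.ne' (by linarith)
  have hdetC : C.det = m := by
    rw [hCeq, det_triMat, ← hM, hMeqm]
  refine ⟨hdetC, ?_⟩
  -- inverse entry
  set A := C.map (Int.cast : ℤ → ℚ) with hA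
  have hdetA : A.det = (m : ℚ) := by
    have h := RingHom.map_det (Int.castRingHom ℚ) C
    rw [hdetC] at h
    simpa [hA, RingHom.mapMatrix_apply] using h.symm
  have h0 : (⟨0, hr⟩ : Fin (s + 1)) = 0 := Fin.ext (by simp)
  have hdetsub : ((A.submatrix Fin.succ ((0 : Fin (s + 1)).succAbove)).det) = (q : ℚ) := by
    have e1 : A.submatrix Fin.succ ((0 : Fin (s + 1)).succAbove)
        = (triMat s (a ∘ Fin.succ)).map (Int.cast : ℤ → ℚ) := by
      rw [hA, hCeq, Matrix.submatrix_map, triMat_sub0]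
    rw [e1]
    have h2 := RingHom.map_det (Int.castRingHom ℚ) (triMat s (a ∘ Fin.succ))
    rw [det_triMat, ← hN, hNeqq] at h2
    simpa using h2.symm
  have hadj : A.adjugate 0 0 = (q : ℚ) := by
    rw [Matrix.adjugate_apply, Matrix.det_succ_row_zero, Fin.sum_univ_succ]
    have hsub : (A.updateRow 0 (Pi.single 0 1)).submatrix Fin.succ ((0 : Fin (s + 1)).succAbove)
        = A.submatrix Fin.succ ((0 : Fin (s + 1)).succAbove) := by
      ext i j
      simp [Matrix.updateRow_ne (Fin.succ_ne_zero i)]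
    have htail : ∀ j : Fin s, (A.updateRow 0 (Pi.single 0 1)) 0 j.succ = 0 := by
      intro j
      rw [Matrix.updateRow_self]
      exact Pi.single_eq_of_ne (Fin.succ_ne_zero j) 1
    simp only [Matrix.updateRow_self, Pi.single_eq_same, Fin.val_zero, pow_zero, one_mul,
      htail, mul_zero, zero_mul, Finset.sum_const_zero, add_zero]
    rw [hsub, hdetsub]
  rw [h0, Matrix.inv_def, Matrix.smul_apply, smul_eq_mul, hdetA, Ring.inverse_eq_inv, hadj,
    div_eq_inv_mul]
end

section
/- Let p be an odd prime and let G be a finite additive abelian p-group (every element of G has order a power of p, e.g. IsPGroup p for the additive group). Let λ : G →+ G →+ AddCircle (1 : ℚ) be symmetric (λ x y = λ y x) with bijective adjoint. Then there exist m : ℕ and elements z : Fin m → G such that: (i) G is the internal direct sum of the cyclic subgroups generated by the z i (the family of subgroups AddSubgroup.zmultiples (z i), viewed as ℤ-submodules, satisfies DirectSum.IsInternal); (ii) λ (z i) (z j) = 0 for all i ≠ j; and (iii) for each i, the additive order of λ (z i) (z i) in AddCircle (1 : ℚ) equals the additive order of z i, which is a power of p — equivalently, writing addOrderOf (z i) =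 p^{k_i}, one has λ (z i) (z i) = class of (u_i : ℚ) / p^{k_i} for some integer u_i coprime to p. That is, every nonsingular symmetric linking pairing on a finite abelian p-group with p odd splits orthogonally as a direct sum of cyclic pairings of the form ⟨u/p^k⟩ with u a unit. -/
open AddCircle in
lemma LK1 (q : ℚ) : addOrderOf ((q : AddCircle (1 : ℚ))) = q.den := by
  have := AddCircle.addOrderOf_coe_rat (p := (1:ℚ)) (q := q)
  rwa [mul_one] at this

lemma LK2 (x : AddCircle (1 : ℚ)) : ∃ q : ℚ, x = (q : AddCircle (1:ℚ)) :=
  ⟨x.out, (QuotientAddGroup.out_eq' x).symm⟩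

lemma LK3 (n : ℤ) : ((n : ℚ) : AddCircle (1:ℚ)) = 0 := by
  rw [AddCircle.coe_eq_zero_iff]
  exact ⟨n, by simp⟩

lemma finSupCons {α : Type*} [CompleteLattice α] {m : ℕ} (f : Fin (m+1) → α) :
    (⨆ j, f j) = f 0 ⊔ ⨆ i : Fin m, f i.succ := by
  apply le_antisymm
  · refine iSup_le fun j => ?_
    induction j using Fin.cases with
    | zero => exact le_sup_left
    | succ i => exact le_sup_of_le_right (le_iSup (fun i : Fin m => f i.succ) i)
  · exact sup_le (le_iSup f 0) (iSup_le fun i => le_iSup f i.succ)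

lemma finSupNe {α : Type*} [CompleteLattice α] {m : ℕ} (f : Fin (m+1) → α) (i0 : Fin m) :
    (⨆ (j) (_ : j ≠ i0.succ), f j) ≤ f 0 ⊔ ⨆ (i : Fin m) (_ : i ≠ i0), f i.succ := by
  refine iSup_le fun j => iSup_le fun hj => ?_
  induction j using Fin.cases with
  | zero => exact le_sup_left
  | succ i =>
    have hi : i ≠ i0 := fun h => hj (by rw [h])
    exact le_sup_of_le_right (le_iSup_of_le i (by simp [hi]))

lemma zmult_map {G : Type*} [AddCommGroup G] (K : Submodule ℤ G) (w : K) :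
    AddSubgroup.toIntSubmodule (AddSubgroup.zmultiples ((w : G))) =
      Submodule.map K.subtype (AddSubgroup.toIntSubmodule (AddSubgroup.zmultiples w)) := by
  ext x
  simp only [Submodule.mem_map]
  simp only [show ∀ (H:Type _) (inst : AddCommGroup H) (S : AddSubgroup H) (y : H), (y ∈ AddSubgroup.toIntSubmodule S ↔ y ∈ S) from fun _ _ _ _ => Iff.rfl, AddSubgroup.mem_zmultiples_iff]
  constructor
  · rintro ⟨k, rfl⟩
    exact ⟨k • w, ⟨k, rfl⟩, by simp⟩
  · rintro ⟨y, ⟨k, rfl⟩, rfl⟩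
    exact ⟨k, by simp⟩

lemma isInternal_cons {G : Type*} [AddCommGroup G] {m : ℕ}
    (K : Submodule ℤ G) (z : G)
    (hc : IsCompl (AddSubgroup.toIntSubmodule (AddSubgroup.zmultiples z)) K)
    (w : Fin m → K)
    (hK : DirectSum.IsInternal
      (fun i : Fin m => AddSubgroup.toIntSubmodule (AddSubgroup.zmultiples (w i)))) :
    DirectSum.IsInternal (fun i : Fin (m+1) =>
      AddSubgroup.toIntSubmodule
        (AddSubgroup.zmultiples (Fin.cons z (fun i => ((w i : G))) i))) := by
  set H := AddSubgroup.toIntSubmodule (AddSubgroup.zmultiples z) with hH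
  set S : Fin m → Submodule ℤ K :=
    fun i => AddSubgroup.toIntSubmodule (AddSubgroup.zmultiples (w i)) with hS
  set T : Fin (m+1) → Submodule ℤ G :=
    fun i => AddSubgroup.toIntSubmodule
        (AddSubgroup.zmultiples ((Fin.cons z (fun i => ((w i : G))) : Fin (m+1) → G) i)) with hT
  rw [DirectSum.isInternal_submodule_iff_iSupIndep_and_iSup_eq_top] at hK ⊢
  obtain ⟨hind, hsup⟩ := hK
  have hZ0 : (Fin.cons z (fun i => ((w i : G))) : Fin (m+1) → G) 0 = z := rfl
  have hZs : ∀ i : Fin m, (Fin.cons z (fun i => ((w i : G))) : Fin (m+1) → G) i.succ = (w i : G) :=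
    fun i => rfl
  have hT0 : T 0 = H := by rw [hT]; exact congrArg _ (congrArg _ hZ0)
  have hTs : ∀ i : Fin m, T i.succ = Submodule.map K.subtype (S i) := by
    intro i
    have : T i.succ = AddSubgroup.toIntSubmodule (AddSubgroup.zmultiples ((w i : G))) := by
      rw [hT]; exact congrArg _ (congrArg _ (hZs i))
    rw [this]
    exact zmult_map K (w i)
  have hSK : ∀ i : Fin m, T i.succ ≤ K := by
    intro i; rw [hTs i]
    exact (Submodule.map_le_iff_le_comap).2 (fun x _ => x.2)
  constructor
  · intro i
    induction i using Fin.cases with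
    | zero =>
      refine Disjoint.mono_right ?_ hc.disjoint
      refine iSup_le fun j => iSup_le fun hj => ?_
      induction j using Fin.cases with
      | zero => exact absurd rfl hj
      | succ i => exact hSK i
    | succ i0 =>
      refine Disjoint.mono_right (finSupNe T i0) ?_
      rw [hT0]
      rw [Submodule.disjoint_def]
      intro x hx hx'
      obtain ⟨h, hh, b, hb, rfl⟩ := Submodule.mem_sup.1 hx'
      have hbK : b ∈ K := by
        have : (⨆ (i : Fin m) (_ : i ≠ i0), T i.succ) ≤ K :=
          iSup_le fun i => iSup_le fun _ => hSK i
        exact this hb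
      have hxK : h + b ∈ K := by
        have := hSK i0 (by rw [hTs i0] at hx ⊢; exact hx)
        exact this
      have hhK : h ∈ K := by
        have : h = (h + b) - b := by abel
        rw [this]; exact K.sub_mem hxK hbK
      have hh0 : h = 0 := by
        have := hc.disjoint
        rw [Submodule.disjoint_def] at this
        exact this h hh hhK
      subst hh0
      rw [zero_add] at hx ⊢
      -- now b ∈ T i0.succ ⊓ sup of others; transfer to K
      have hb' : b ∈ Submodule.map K.subtype (⨆ (i : Fin m) (_ : i ≠ i0), S i) := by
        refine (le_trans ?_ le_rfl : (⨆ (i : Fin m) (_ : i ≠ i0), T i.succ) ≤ _) hb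
        refine iSup_le fun i => iSup_le fun hi => ?_
        rw [hTs i]
        exact Submodule.map_mono (le_iSup_of_le i (by simp [hi]))
      rw [hTs i0] at hx
      have hmap : Submodule.map K.subtype (S i0) ⊓
          Submodule.map K.subtype (⨆ (i : Fin m) (_ : i ≠ i0), S i) = ⊥ := by
        rw [← Submodule.map_inf _ K.injective_subtype]
        have : S i0 ⊓ (⨆ (i : Fin m) (_ : i ≠ i0), S i) = ⊥ :=
          disjoint_iff.1 (hind i0)
        rw [this, Submodule.map_bot]
      have : b ∈ (⊥ : Submodule ℤ G) := by
        rw [← hmap]; exact ⟨hx, hb'⟩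
      simpa using this
  · rw [finSupCons T, hT0]
    have : (⨆ i : Fin m, T i.succ) = K := by
      have : (⨆ i : Fin m, T i.succ) = Submodule.map K.subtype (⨆ i, S i) := by
        rw [Submodule.map_iSup]
        exact iSup_congr hTs
      rw [this, hsup, Submodule.map_top, Submodule.range_subtype]
    rw [this]
    exact hc.sup_eq_top

lemma isInternal_zero {G : Type*} [AddCommGroup G] (h : ∀ g : G, g = 0)
    (A : Fin 0 → Submodule ℤ G) : DirectSum.IsInternal A := by
  constructor
  · intro a b _
    exact DFinsupp.ext fun i => i.elim0
  · intro g
    exact ⟨0, by rw [map_zero, h g]⟩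

-- p-power divisor helpers
lemma ppow_helper {p : ℕ} (hp : p.Prime) {N e : ℕ} (he : 1 ≤ e)
    (h1 : N ∣ p ^ e) (h2 : ¬ N ∣ p ^ (e - 1)) : N = p ^ e := by
  obtain ⟨d, hd, rfl⟩ := (Nat.dvd_prime_pow hp).1 h1
  rcases eq_or_lt_of_le hd with h | h
  · rw [h]
  · exact absurd (pow_dvd_pow p (by omega)) h2

lemma ppow_helper2 {p : ℕ} (hp : p.Prime) {N e : ℕ} (he : 1 ≤ e)
    (h1 : N ∣ p ^ e) (h2 : N ≠ p ^ e) : N ∣ p ^ (e - 1) := by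
  by_contra h
  exact h2 (ppow_helper hp he h1 h)

section
variable {p : ℕ} [hp : Fact p.Prime]

lemma exists_z (hodd : Odd p) {G : Type*} [AddCommGroup G] [Finite G]
    (hpG : ∀ g : G, ∃ c : ℕ, p ^ c • g = 0)
    (l : G →+ G →+ AddCircle (1 : ℚ))
    (hsymm : ∀ x y : G, l x y = l y x)
    (hinj : Function.Injective fun x : G => l x)
    (hnt : ∃ g : G, g ≠ 0) :
    ∃ (z : G) (e : ℕ), 1 ≤ e ∧ addOrderOf z = p ^ e ∧ addOrderOf (l z z) = p ^ e ∧
      ∀ g : G, addOrderOf g ∣ p ^ e := by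
  have horder : ∀ g : G, ∃ c : ℕ, addOrderOf g = p ^ c := by
    intro g
    obtain ⟨c, hc⟩ := hpG g
    obtain ⟨d, _, hd⟩ := (Nat.dvd_prime_pow hp.out).1
      (addOrderOf_dvd_iff_nsmul_eq_zero.2 hc)
    exact ⟨d, hd⟩
  obtain ⟨x, hx⟩ := Finite.exists_max (addOrderOf : G → ℕ)
  obtain ⟨e, he⟩ := horder x
  have hppos : 1 < p := hp.out.one_lt
  have he1 : 1 ≤ e := by
    by_contra h
    have he0 : e = 0 := by omega
    obtain ⟨g0, hg0⟩ := hnt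
    obtain ⟨c0, hc0⟩ := horder g0
    have : addOrderOf g0 ≤ 1 := by
      have := hx g0; rw [he, he0, pow_zero] at this; exact this
    have : addOrderOf g0 = 1 := by
      have hpos : 0 < addOrderOf g0 := by
        rw [hc0]; positivity
      omega
    exact hg0 (AddMonoid.addOrderOf_eq_one_iff.1 this)
  have hdvd : ∀ g : G, addOrderOf g ∣ p ^ e := by
    intro g
    obtain ⟨c, hc⟩ := horder g
    have : p ^ c ≤ p ^ e := by rw [← hc, ← he]; exact hx g
    have : c ≤ e := (Nat.pow_le_pow_iff_right hppos).1 this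
    rw [hc]; exact pow_dvd_pow p this
  -- smul zero facts
  have hsm : ∀ g : G, p ^ e • g = 0 :=
    fun g => addOrderOf_dvd_iff_nsmul_eq_zero.1 (hdvd g)
  have hordlx : addOrderOf ((fun x : G => l x) x) = p ^ e := by
    rw [addOrderOf_injective l hinj x, he]
  -- values of l _ _ have order dividing p ^ e
  have hvdvd : ∀ a b : G, addOrderOf (l a b) ∣ p ^ e := by
    intro a b
    rw [addOrderOf_dvd_iff_nsmul_eq_zero, ← map_nsmul, hsm, map_zero]
  -- find y with l x y of order p ^ e
  have hxne : ¬ (p ^ (e - 1)) • (l x) = 0 := by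
    intro h
    have : addOrderOf (l x) ∣ p ^ (e - 1) := addOrderOf_dvd_iff_nsmul_eq_zero.2 h
    rw [show (l x) = (fun x : G => l x) x from rfl, hordlx] at this
    have := (Nat.pow_dvd_pow_iff_le_right hppos).1 this
    omega
  have hy : ∃ y : G, addOrderOf (l x y) = p ^ e := by
    by_contra h
    push_neg at h
    apply hxne
    ext y
    have h1 := hvdvd x y
    have h2 := ppow_helper2 hp.out he1 h1 (h y)
    have := addOrderOf_dvd_iff_nsmul_eq_zero.1 h2
    simpa using this
  obtain ⟨y, hy⟩ := hy
  by_cases hxx : addOrderOf (l x x) = p ^ e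
  · exact ⟨x, e, he1, he, hxx, hdvd⟩
  by_cases hyy : addOrderOf (l y y) = p ^ e
  · refine ⟨y, e, he1, ?_, hyy, hdvd⟩
    have h1 : addOrderOf (l y y) ∣ addOrderOf y := by
      rw [addOrderOf_dvd_iff_nsmul_eq_zero]
      have : (addOrderOf y) • y = 0 := addOrderOf_nsmul_eq_zero y
      calc (addOrderOf y) • ((l y) y) = (l ((addOrderOf y) • y)) y := by
            rw [map_nsmul]; rfl
        _ = 0 := by rw [this, map_zero]; rfl
    rw [hyy] at h1
    exact Nat.dvd_antisymm (hdvd y) h1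
  -- z = x + y
  refine ⟨x + y, e, he1, ?_, ?_, hdvd⟩ <;>
  · have hA := ppow_helper2 hp.out he1 (hvdvd x x) hxx
    have hB := ppow_helper2 hp.out he1 (hvdvd y y) hyy
    have hAz : (p ^ (e-1)) • (l x x) = 0 := addOrderOf_dvd_iff_nsmul_eq_zero.1 hA
    have hBz : (p ^ (e-1)) • (l y y) = 0 := addOrderOf_dvd_iff_nsmul_eq_zero.1 hB
    have hexp : l (x + y) (x + y) = (l x y + l x y) + (l x x + l y y) := by
      rw [map_add]
      simp only [AddMonoidHom.add_apply, map_add]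
      rw [hsymm y x]
      abel
    have hnd : ¬ addOrderOf (l (x+y) (x+y)) ∣ p ^ (e - 1) := by
      intro h
      have h0 : (p ^ (e-1)) • (l (x+y) (x+y)) = 0 :=
        addOrderOf_dvd_iff_nsmul_eq_zero.1 h
      rw [hexp] at h0
      have h2 : (p ^ (e-1)) • (l x y + l x y) = 0 := by
        rw [smul_add, smul_add, smul_add, hAz, hBz] at h0
        rw [smul_add]
        simpa using h0
      have h3 : (2 * p ^ (e-1)) • (l x y) = 0 := by
        rw [two_mul, add_smul]
        rw [smul_add] at h2
        exact h2
      have h4 : addOrderOf (l x y) ∣ 2 * p ^ (e-1) :=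
        addOrderOf_dvd_iff_nsmul_eq_zero.2 h3
      rw [hy] at h4
      have hcop : Nat.Coprime (p ^ e) 2 := by
        apply Nat.Coprime.pow_left
        rw [Nat.coprime_two_right]
        exact hodd
      have h5 : p ^ e ∣ p ^ (e - 1) := (Nat.Coprime.dvd_of_dvd_mul_left hcop) h4
      have := (Nat.pow_dvd_pow_iff_le_right hppos).1 h5
      omega
    have hzz : addOrderOf (l (x+y) (x+y)) = p ^ e :=
      ppow_helper hp.out he1 (hvdvd _ _) hnd
    have hzord : addOrderOf (x + y) = p ^ e := by
      have h1 : addOrderOf (l (x+y) (x+y)) ∣ addOrderOf (x+y) := by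
        rw [addOrderOf_dvd_iff_nsmul_eq_zero]
        calc (addOrderOf (x+y)) • ((l (x+y)) (x+y))
            = (l ((addOrderOf (x+y)) • (x+y))) (x+y) := by rw [map_nsmul]; rfl
          _ = 0 := by rw [addOrderOf_nsmul_eq_zero, map_zero]; rfl
      rw [hzz] at h1
      exact Nat.dvd_antisymm (hdvd _) h1
    first
    | exact hzord
    | exact hzz
end

universe u

lemma auxmain (p : ℕ) [hp : Fact p.Prime] (hodd : Odd p) :
    ∀ (n : ℕ) (G : Type u) [AddCommGroup G] [Fintype G],
      Fintype.card G ≤ n →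
      (∀ g : G, ∃ c : ℕ, p ^ c • g = 0) →
      ∀ (l : G →+ G →+ AddCircle (1 : ℚ)),
        (∀ x y : G, l x y = l y x) →
        Function.Bijective (fun x : G => l x) →
        ∃ (m : ℕ) (z : Fin m → G),
          DirectSum.IsInternal
              (fun i : Fin m => AddSubgroup.toIntSubmodule (AddSubgroup.zmultiples (z i))) ∧
            (∀ i j : Fin m, i ≠ j → l (z i) (z j) = 0) ∧
            ∀ i : Fin m,
              addOrderOf (l (z i) (z i)) = addOrderOf (z i) ∧
              ∃ (k : ℕ) (u : ℤ), addOrderOf (z i) = p ^ k ∧ Int.gcd u p = 1 ∧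
                l (z i) (z i) = (((u : ℚ) / ((p : ℚ) ^ k) : ℚ) : AddCircle (1 : ℚ)) := by
  intro n
  induction n using Nat.strong_induction_on with
  | _ n ih =>
  intro G _ _ hcard hpG l hsymm hadj
  by_cases hG : ∀ g : G, g = 0
  · exact ⟨0, Fin.elim0, isInternal_zero hG _, fun i => i.elim0, fun i => i.elim0⟩
  push_neg at hG
  obtain ⟨z, e, he1, hz1, hz2, hdvd⟩ := exists_z hodd hpG l hsymm hadj.injective hG
  have hppos : 1 < p := hp.out.one_lt
  have hpe1 : 1 < p ^ e := by
    calc 1 < p := hppos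
    _ = p ^ 1 := (pow_one p).symm
    _ ≤ p ^ e := Nat.pow_le_pow_right (by omega) he1
  -- the diagonal value as a rational
  obtain ⟨q, hq⟩ := LK2 (l z z)
  have hden : q.den = p ^ e := by rw [← LK1 q, ← hq, hz2]
  have hucop : Nat.Coprime q.num.natAbs p := by
    have := q.reduced
    rw [hden] at this
    exact Nat.Coprime.coprime_dvd_right (dvd_pow_self p (by omega : e ≠ 0)) this
  -- coprime inverse
  have hcop' : IsCoprime (q.num) ((p : ℤ) ^ e) := by
    rw [Int.isCoprime_iff_gcd_eq_one]
    have : Int.gcd q.num ((p : ℤ) ^ e) = Nat.gcd q.num.natAbs (p ^ e) := by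
      simp [Int.gcd, Int.natAbs_pow]
    rw [this, ← hden]
    exact q.reduced
  obtain ⟨s, t, hst⟩ := hcop'
  -- the subgroups
  set H : Submodule ℤ G := AddSubgroup.toIntSubmodule (AddSubgroup.zmultiples z) with hH
  set K : Submodule ℤ G := AddSubgroup.toIntSubmodule (l z).ker with hK
  have hmemH : ∀ x : G, x ∈ H ↔ ∃ n : ℤ, n • z = x := by
    intro x; exact AddSubgroup.mem_zmultiples_iff
  have hmemK : ∀ x : G, x ∈ K ↔ l z x = 0 := by
    intro x; exact AddMonoidHom.mem_ker
  have hzK : ∀ (k : G), k ∈ K → ∀ (h : G), h ∈ H → l k h = 0 := by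
    intro k hk h hh
    obtain ⟨n, rfl⟩ := (hmemH h).1 hh
    rw [map_zsmul, hsymm k z, (hmemK k).1 hk, smul_zero]
  have hdisj : Disjoint H K := by
    rw [Submodule.disjoint_def]
    intro x hxH hxK
    obtain ⟨n, rfl⟩ := (hmemH x).1 hxH
    have h0 : n • (l z z) = 0 := by
      rw [← map_zsmul, (hmemK _).1 hxK]
    have hd : ((p : ℤ) ^ e) ∣ n := by
      have := addOrderOf_dvd_iff_zsmul_eq_zero.2 h0
      rw [hz2] at this
      exact_mod_cast this
    obtain ⟨c, rfl⟩ := hd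
    have hz0 : ((p : ℤ) ^ e) • z = 0 := by
      have h' : ((p ^ e : ℕ) : ℤ) • z = 0 := by
        rw [natCast_zsmul, addOrderOf_dvd_iff_nsmul_eq_zero.1 (hdvd z)]
      rw [← h']; norm_num
    rw [mul_comm, mul_smul, hz0, smul_zero]
  have hsup : H ⊔ K = ⊤ := by
    rw [eq_top_iff]
    intro g _
    -- representative of l z g
    obtain ⟨q', hq'⟩ := LK2 (l z g)
    have hden' : q'.den ∣ p ^ e := by
      rw [← LK1 q', ← hq']
      rw [addOrderOf_dvd_iff_nsmul_eq_zero, ← map_nsmul,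
        addOrderOf_dvd_iff_nsmul_eq_zero.1 (hdvd g), map_zero]
    set c : ℕ := p ^ e / q'.den with hc
    have hcd : q'.den * c = p ^ e := Nat.mul_div_cancel' hden'
    have hcne : (c : ℚ) ≠ 0 := by
      have : c ≠ 0 := by
        intro h
        rw [h, mul_zero] at hcd
        exact absurd hcd.symm (by positivity : (0:ℕ) < p ^ e).ne'
      exact_mod_cast this
    set a : ℤ := q'.num * c with ha
    have haq : (a : ℚ) / ((p : ℚ) ^ e) = (q' : ℚ) := by
      have hpe : ((p : ℚ) ^ e) = (q'.den : ℚ) * (c : ℚ) := by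
        rw [← Nat.cast_mul, hcd]; push_cast; ring
      rw [ha, hpe]
      push_cast
      rw [mul_div_mul_right _ _ hcne]
      exact Rat.num_div_den q'
    -- now subtract the right multiple of z
    refine Submodule.mem_sup.2 ⟨(a * s) • z, (hmemH _).2 ⟨a * s, rfl⟩,
      g - (a * s) • z, (hmemK _).2 ?_, by abel⟩
    rw [map_sub, map_zsmul, hq, hq']
    have hpne : ((p:ℚ) ^ e) ≠ 0 := by positivity
    have hq2 : (q : ℚ) = (q.num : ℚ) / ((p : ℚ) ^ e) := by
      conv_lhs => rw [← Rat.num_div_den q]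
      rw [hden]
      push_cast
      ring
    have hstQ : (s : ℚ) * ((q.num : ℚ)) + (t : ℚ) * ((p : ℚ) ^ e) = 1 := by
      exact_mod_cast congrArg (fun x : ℤ => (x : ℚ)) hst
    have key : (q' : ℚ) - (((a * s : ℤ)) : ℚ) * (q : ℚ) = (((a * t : ℤ)) : ℚ) := by
      have haq' : (a : ℚ) = (q' : ℚ) * ((p : ℚ) ^ e) := (div_eq_iff hpne).1 haq
      have hq2' : (q : ℚ) * ((p : ℚ) ^ e) = (q.num : ℚ) := (eq_div_iff hpne).1 hq2
      push_cast
      linear_combination (-((s : ℚ) * (q : ℚ) + (t : ℚ))) * haq' -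
        ((q' : ℚ) * (s : ℚ)) * hq2' - (q' : ℚ) * hstQ
    have hsub : ((q' : ℚ) : AddCircle (1:ℚ)) - (a * s) • ((q : ℚ) : AddCircle (1:ℚ))
        = ((((q' : ℚ) - (((a * s : ℤ)) : ℚ) * (q : ℚ)) : ℚ) : AddCircle (1:ℚ)) := by
      rw [← AddCircle.coe_zsmul, zsmul_eq_mul, sub_eq_add_neg, sub_eq_add_neg,
        ← AddCircle.coe_neg, ← AddCircle.coe_add]
    rw [hsub, key, LK3 (a * t)]
  -- the complement
  have hcompl : IsCompl H K := ⟨hdisj, codisjoint_iff.2 hsup⟩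
  -- restricted pairing
  set lr : K →+ K →+ AddCircle (1 : ℚ) :=
    AddMonoidHom.mk' (fun a : K => (l (a : G)).comp K.subtype.toAddMonoidHom)
      (fun a b => by ext c; simp) with hlr
  have hlr_apply : ∀ (a b : K), lr a b = l (a : G) (b : G) := fun a b => rfl
  -- projection onto K along H
  set π : G →ₗ[ℤ] K := Submodule.linearProjOfIsCompl K H hcompl.symm with hπ
  have hπK : ∀ k : K, π (k : G) = k :=
    fun k => Submodule.linearProjOfIsCompl_apply_left hcompl.symm k
  have hπH : ∀ g : G, g - ((π g : K) : G) ∈ H := by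
    intro g
    have h0 : π (g - ((π g : K) : G)) = 0 := by
      rw [map_sub, hπK (π g), sub_self]
    exact (Submodule.linearProjOfIsCompl_apply_eq_zero_iff hcompl.symm).1 h0
  have hdecomp : ∀ (k : K) (g : G), l (k : G) g = lr k (π g) := by
    intro k g
    have h1 : l (k : G) (g - ((π g : K) : G)) = 0 := hzK _ k.2 _ (hπH g)
    calc l (k : G) g = l (k : G) ((g - ((π g : K) : G)) + ((π g : K) : G)) := by
          rw [sub_add_cancel]
      _ = l (k : G) (g - ((π g : K) : G)) + l (k : G) ((π g : K) : G) := map_add _ _ _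
      _ = lr k (π g) := by rw [h1, zero_add, hlr_apply]
  have hinj' : Function.Injective fun a : K => lr a := by
    intro a b hab
    have hab' : lr a = lr b := hab
    have h1 : l (a : G) = l (b : G) := by
      ext g
      rw [hdecomp a g, hdecomp b g, hab']
    exact Subtype.ext (hadj.injective h1)
  have hsurj' : Function.Surjective fun a : K => lr a := by
    intro φ
    obtain ⟨g, hg⟩ := hadj.surjective (φ.comp π.toAddMonoidHom)
    refine ⟨π g, ?_⟩
    ext k
    have h2 : l g (k : G) = φ (π ((k : K) : G)) := DFunLike.congr_fun hg (k : G)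
    calc lr (π g) k = l ((π g : K) : G) (k : G) := hlr_apply _ _
      _ = l (k : G) ((π g : K) : G) := hsymm _ _
      _ = lr k (π g) := hlr_apply _ _
      _ = l (k : G) g := (hdecomp k g).symm
      _ = l g (k : G) := hsymm _ _
      _ = φ (π ((k : K) : G)) := h2
      _ = φ k := by rw [hπK k]
  haveI : Fintype K := Fintype.ofFinite K
  have hzKmem : z ∉ K := by
    intro hzk
    have h0 : l z z = 0 := (hmemK z).1 hzk
    rw [h0, addOrderOf_zero] at hz2
    omega
  have hcardK : Fintype.card K < n := by
    have h1 : Fintype.card K < Fintype.card G :=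
      Fintype.card_lt_of_injective_of_notMem ((↑) : K → G) Subtype.val_injective
        (by simpa using hzKmem)
    omega
  have hpG' : ∀ k : K, ∃ c : ℕ, p ^ c • k = 0 := by
    intro k
    obtain ⟨c, hc⟩ := hpG (k : G)
    exact ⟨c, Subtype.ext (by simpa using hc)⟩
  have hsymm' : ∀ a b : K, lr a b = lr b a := fun a b => hsymm _ _
  obtain ⟨m, w, hw1, hw2, hw3⟩ :=
    ih (Fintype.card K) hcardK K le_rfl hpG' lr hsymm' ⟨hinj', hsurj'⟩
  refine ⟨m + 1, Fin.cons z (fun i => ((w i : G))), ?_, ?_, ?_⟩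
  · exact isInternal_cons K z hcompl w hw1
  · intro i j hij
    induction i using Fin.cases with
    | zero =>
      induction j using Fin.cases with
      | zero => exact absurd rfl hij
      | succ j =>
        simp only [Fin.cons_zero, Fin.cons_succ]
        exact (hmemK _).1 (w j).2
    | succ i =>
      induction j using Fin.cases with
      | zero =>
        simp only [Fin.cons_zero, Fin.cons_succ]
        rw [hsymm]
        exact (hmemK _).1 (w i).2
      | succ j =>
        have hij' : i ≠ j := fun h => hij (by rw [h])
        simp only [Fin.cons_succ]
        exact hw2 i j hij'
  · intro i
    have hq2 : (q : ℚ) = (q.num : ℚ) / ((p : ℚ) ^ e) := by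
      conv_lhs => rw [← Rat.num_div_den q]
      rw [hden]
      push_cast
      ring
    induction i using Fin.cases with
    | zero =>
      constructor
      · simp only [Fin.cons_zero]
        rw [hz1, hz2]
      · refine ⟨e, q.num, ?_, ?_, ?_⟩
        · simp only [Fin.cons_zero]; exact hz1
        · have : Int.gcd q.num (p : ℤ) = Nat.gcd q.num.natAbs p := by
            simp [Int.gcd]
          rw [this]
          exact hucop
        · simp only [Fin.cons_zero]
          rw [hq]
          exact congrArg (fun r : ℚ => (r : AddCircle (1:ℚ))) hq2
    | succ i =>
      obtain ⟨hwa, k, u, hw3a, hw3b, hw3c⟩ := hw3 i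
      have hcoe : addOrderOf ((w i : G)) = addOrderOf (w i) :=
        addOrderOf_injective K.subtype.toAddMonoidHom Subtype.val_injective (w i)
      constructor
      · simp only [Fin.cons_succ]
        rw [hcoe]
        exact hwa
      · refine ⟨k, u, ?_, hw3b, ?_⟩
        · simp only [Fin.cons_succ]
          rw [hcoe]
          exact hw3a
        · simp only [Fin.cons_succ]
          exact hw3c

/-- Every nonsingular symmetric linking pairing on a finite abelian `p`-group, `p` an
odd prime, splits orthogonally as a direct sum of cyclic pairings `⟨u/p^k⟩` with `u`
prime to `p`. -/
theorem stmt_19 (p : ℕ) [Fact p.Prime] (hodd : Odd p)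
    (G : Type*) [AddCommGroup G] [Fintype G]
    (hpG : ∀ g : G, ∃ c : ℕ, p ^ c • g = 0)
    (l : G →+ G →+ AddCircle (1 : ℚ))
    (hsymm : ∀ x y : G, l x y = l y x)
    (hadj : Function.Bijective fun x : G => l x) :
    ∃ (m : ℕ) (z : Fin m → G),
      DirectSum.IsInternal
          (fun i : Fin m => AddSubgroup.toIntSubmodule (AddSubgroup.zmultiples (z i))) ∧
        (∀ i j : Fin m, i ≠ j → l (z i) (z j) = 0) ∧
        ∀ i : Fin m,
          addOrderOf (l (z i) (z i)) = addOrderOf (z i) ∧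
          ∃ (k : ℕ) (u : ℤ), addOrderOf (z i) = p ^ k ∧ Int.gcd u p = 1 ∧
            l (z i) (z i) = (((u : ℚ) / ((p : ℚ) ^ k) : ℚ) : AddCircle (1 : ℚ)) := by
  exact auxmain p hodd (Fintype.card G) G le_rfl hpG l hsymm hadj
end
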